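/- arXiv:2010.15968 — 4 statements merged into one kernel-verified Lean document; each statement's English description precedes it below -/
import Mathlib

section
/- Let ρ be a density matrix on C^{D_v}⊗C^{D_h} (indexed by Fin D_v × Fin D_h), and let O be a Hermitian D_v×D_v matrix. Then |Tr((O ⊗ I_{D_h})·(ρ − I/(D_v·D_h)))| ≤ ‖O‖_∞ · √(2·(log D_v − S(Tr_h ρ))), where Tr_h ρ is the partial trace of ρ over the hidden (second) factor and S is the von Neumann entropy. -/
open Matrix BigOperators
open scoped ComplexOrder Kronecker

/-- The operator norm (largest singular value) of a complex square matrix, realized as the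
norm of the induced operator on Euclidean space. -/
noncomputable def opNorm {n : Type*} [Fintype n] [DecidableEq n] (A : Matrix n n ℂ) : ℝ :=
  ‖Matrix.toEuclideanCLM (𝕜 := ℂ) A‖

/-- The von Neumann entropy `∑ i, -λ i * log (λ i)` of a matrix, computed from its
eigenvalues when it is Hermitian (and `0` otherwise). -/
noncomputable def vNEntropy {n : Type*} [Fintype n] [DecidableEq n] (σ : Matrix n n ℂ) : ℝ :=
  if h : σ.IsHermitian then ∑ i, Real.negMulLog (h.eigenvalues i) else 0

/-- Partial trace over the hidden (second) tensor factor. -/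
noncomputable def trH {Dv Dh : ℕ} (M : Matrix (Fin Dv × Fin Dh) (Fin Dv × Fin Dh) ℂ) :
    Matrix (Fin Dv) (Fin Dv) ℂ :=
  Matrix.of fun p v => ∑ q, M (p, q) (v, q)

section PinskerAux
open Real

noncomputable def pkF : ℝ → ℝ := fun x => x * Real.log x - x + 1 - 3*(x-1)^2/(2*(x+2))
noncomputable def pkF1 : ℝ → ℝ := fun x => Real.log x - 3*(x-1)*(x+5)/(2*(x+2)^2)
noncomputable def pkF2 : ℝ → ℝ := fun x => 1/x - 27/(x+2)^3

lemma pkF_hasDeriv {x : ℝ} (hx : 0 < x) : HasDerivAt pkF (pkF1 x) x := by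
  have h2 : (2*(x+2)) ≠ 0 := by nlinarith
  have hd : HasDerivAt (fun x : ℝ => 3*(x-1)^2/(2*(x+2)))
      ((3*(2*(x-1))*(2*(x+2)) - 3*(x-1)^2*2)/(2*(x+2))^2) x := by
    have hn : HasDerivAt (fun x : ℝ => 3*(x-1)^2) (3*(2*(x-1))) x := by
      have : HasDerivAt (fun x : ℝ => x - 1) 1 x := (hasDerivAt_id x).sub_const 1
      simpa using (this.pow 2).const_mul 3
    have hdd : HasDerivAt (fun x : ℝ => 2*(x+2)) 2 x := by
      simpa using ((hasDerivAt_id x).add_const 2).const_mul 2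
    exact hn.div hdd h2
  have hm : HasDerivAt (fun x : ℝ => x * Real.log x) (Real.log x + 1) x :=
    Real.hasDerivAt_mul_log hx.ne'
  have := ((hm.sub (hasDerivAt_id x)).add_const 1).sub hd
  refine this.congr_deriv ?_
  unfold pkF1
  field_simp
  ring

lemma pkF1_hasDeriv {x : ℝ} (hx : 0 < x) : HasDerivAt pkF1 (pkF2 x) x := by
  have h2 : (2*(x+2)^2) ≠ 0 := by nlinarith
  have hd : HasDerivAt (fun x : ℝ => 3*(x-1)*(x+5)/(2*(x+2)^2))
      (((3*(x+5) + 3*(x-1))*(2*(x+2)^2) - 3*(x-1)*(x+5)*(2*(2*(x+2))))/(2*(x+2)^2)^2) x := by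
    have hn : HasDerivAt (fun x : ℝ => 3*(x-1)*(x+5)) (3*(x+5) + 3*(x-1)) x := by
      have h1 : HasDerivAt (fun x : ℝ => 3*(x-1)) 3 x := by
        simpa using ((hasDerivAt_id x).sub_const 1).const_mul 3
      have h5 : HasDerivAt (fun x : ℝ => x + 5) 1 x := (hasDerivAt_id x).add_const 5
      have := h1.mul h5
      exact this.congr_deriv (by ring)
    have hdd : HasDerivAt (fun x : ℝ => 2*(x+2)^2) (2*(2*(x+2))) x := by
      have : HasDerivAt (fun x : ℝ => x + 2) 1 x := (hasDerivAt_id x).add_const 2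
      simpa using (this.pow 2).const_mul 2
    exact hn.div hdd h2
  have hl : HasDerivAt Real.log (1/x) x := by
    simpa [one_div] using Real.hasDerivAt_log hx.ne'
  have := hl.sub hd
  refine this.congr_deriv ?_
  unfold pkF2
  have hx2 : (x+2) ≠ 0 := by nlinarith
  field_simp
  ring

lemma pkF2_nonneg {x : ℝ} (hx : 0 < x) : 0 ≤ pkF2 x := by
  unfold pkF2
  rw [sub_nonneg, div_le_div_iff₀ (by positivity) hx]
  nlinarith [sq_nonneg (x-1), hx.le]

lemma pkF1_mono : MonotoneOn pkF1 (Set.Ioi (0:ℝ)) := by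
  have : interior (Set.Ioi (0:ℝ)) = Set.Ioi 0 := interior_Ioi
  refine monotoneOn_of_deriv_nonneg (convex_Ioi 0) ?_ ?_ ?_
  · exact fun x hx => (pkF1_hasDeriv (by exact hx)).continuousAt.continuousWithinAt
  · rw [this]; exact fun x hx => (pkF1_hasDeriv hx).differentiableAt.differentiableWithinAt
  · rw [this]; intro x hx; rw [(pkF1_hasDeriv hx).deriv]; exact pkF2_nonneg hx

lemma pkF1_one : pkF1 1 = 0 := by unfold pkF1; norm_num

lemma pkF_one : pkF 1 = 0 := by unfold pkF; norm_num

lemma pkF_nonneg {x : ℝ} (hx : 0 ≤ x) : 0 ≤ pkF x := by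
  rcases le_total x 1 with h | h
  · -- antitone on [0,1]
    have hanti : AntitoneOn pkF (Set.Icc (0:ℝ) 1) := by
      refine antitoneOn_of_deriv_nonpos (convex_Icc 0 1) ?_ ?_ ?_
      · have hc : ContinuousOn (fun x : ℝ => x * Real.log x - x + 1 - 3*(x-1)^2/(2*(x+2)))
            (Set.Icc (0:ℝ) 1) := by
          apply ContinuousOn.sub
          · exact (((Real.continuous_mul_log.continuousOn).sub continuousOn_id).add
              continuousOn_const)
          · exact ContinuousOn.div (by fun_prop) (by fun_prop)
              (fun x hx => by nlinarith [hx.1])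
        exact hc
      · rw [interior_Icc]
        exact fun x hx => (pkF_hasDeriv hx.1).differentiableAt.differentiableWithinAt
      · rw [interior_Icc]
        intro x hx
        rw [(pkF_hasDeriv hx.1).deriv]
        have := pkF1_mono (Set.mem_Ioi.2 hx.1) (Set.mem_Ioi.2 one_pos) hx.2.le
        rwa [pkF1_one] at this
    have := hanti (Set.mem_Icc.2 ⟨hx, h⟩) (Set.mem_Icc.2 ⟨zero_le_one, le_refl 1⟩) h
    rwa [pkF_one] at this
  · have hmono : MonotoneOn pkF (Set.Ici (1:ℝ)) := by
      refine monotoneOn_of_deriv_nonneg (convex_Ici 1) ?_ ?_ ?_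
      · exact fun x hx => (pkF_hasDeriv (lt_of_lt_of_le one_pos hx)).continuousAt.continuousWithinAt
      · rw [interior_Ici]
        exact fun x hx => (pkF_hasDeriv (lt_trans one_pos hx)).differentiableAt.differentiableWithinAt
      · rw [interior_Ici]
        intro x hx
        rw [(pkF_hasDeriv (lt_trans one_pos hx)).deriv]
        have := pkF1_mono (Set.mem_Ioi.2 one_pos) (Set.mem_Ioi.2 (lt_trans one_pos hx)) (le_of_lt hx)
        rwa [pkF1_one] at this
    have := hmono (Set.mem_Ici.2 (le_refl 1)) (Set.mem_Ici.2 h) h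
    rwa [pkF_one] at this

lemma pk_key {p q : ℝ} (hp : 0 ≤ p) (hq : 0 < q) :
    3*(p-q)^2/(2*(p+2*q)) ≤ p*Real.log p - p*Real.log q - p + q := by
  rcases eq_or_lt_of_le hp with h | hp
  · rw [← h]
    have : 3*((0:ℝ)-q)^2/(2*(0+2*q)) = 3*q/4 := by field_simp; ring
    rw [this]; simp; nlinarith
  · have hfx := pkF_nonneg (le_of_lt (div_pos hp hq))
    have hmain : q * pkF (p/q) = p*Real.log p - p*Real.log q - p + q
        - 3*(p-q)^2/(2*(p+2*q)) := by
      unfold pkF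
      rw [Real.log_div hp.ne' hq.ne']
      have h1 : p + 2*q > 0 := by nlinarith
      field_simp
    nlinarith [mul_nonneg hq.le hfx]

lemma pinsker_uniform {D : ℕ} (hD : 0 < D) (lam : Fin D → ℝ)
    (h0 : ∀ i, 0 ≤ lam i) (h1 : ∑ i, lam i = 1) :
    ∑ i, |lam i - (D:ℝ)⁻¹| ≤
      Real.sqrt (2 * (Real.log D - ∑ i, Real.negMulLog (lam i))) := by
  set q : ℝ := (D:ℝ)⁻¹ with hqdef
  have hDpos : (0:ℝ) < D := by exact_mod_cast hD
  have hq : 0 < q := by positivity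
  have hsq : (D:ℝ) * q = 1 := by rw [hqdef]; field_simp
  -- KL divergence
  set KL : ℝ := Real.log D - ∑ i, Real.negMulLog (lam i) with hKL
  have hKLe : KL = ∑ i, (lam i * Real.log (lam i) - lam i * Real.log q - lam i + q) := by
    have e1 : ∑ i, (lam i * Real.log (lam i) - lam i * Real.log q - lam i + q)
        = (∑ i, lam i * Real.log (lam i)) - (∑ i, lam i) * Real.log q
          - (∑ i, lam i) + (D:ℝ) * q := by
      rw [Finset.sum_add_distrib, Finset.sum_sub_distrib, Finset.sum_sub_distrib,
        Finset.sum_mul]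
      simp only [Finset.sum_const, Finset.card_univ, Fintype.card_fin, nsmul_eq_mul]
    rw [e1, h1, hsq, hqdef, Real.log_inv, hKL]
    simp [Real.negMulLog, Finset.sum_neg_distrib]
    ring
  set V : ℝ := ∑ i, |lam i - q| with hV
  have hVnn : 0 ≤ V := Finset.sum_nonneg fun i _ => abs_nonneg _
  set S : ℝ := ∑ i, 3*(lam i - q)^2/(2*(lam i + 2*q)) with hS
  have hden : ∀ i : Fin D, 0 < lam i + 2*q := fun i => by nlinarith [h0 i]
  have hSKL : S ≤ KL := by
    rw [hS, hKLe]
    exact Finset.sum_le_sum fun i _ => pk_key (h0 i) hq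
  have hsumf : ∑ i, 2*(lam i + 2*q)/3 = 2 := by
    have e : ∑ i, (lam i + 2*q) = 3 := by
      rw [Finset.sum_add_distrib, h1, Finset.sum_const, Finset.card_univ, Fintype.card_fin,
        nsmul_eq_mul]
      nlinarith
    rw [← Finset.sum_div, ← Finset.mul_sum, e]
    norm_num
  have hCS : V^2 ≤ (∑ i, 2*(lam i + 2*q)/3) * S := by
    refine Finset.sum_sq_le_sum_mul_sum_of_sq_eq_mul _
      (fun i _ => by have := hden i; positivity)
      (fun i _ => by have := hden i; positivity) (fun i _ => ?_)
    have h2 : lam i + 2*q ≠ 0 := (hden i).ne'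
    rw [sq_abs]
    rw [div_mul_div_comm]
    field_simp
    exact (mul_div_cancel_right₀ _ (show (0:ℝ) < lam i + q*2 by linarith [hden i]).ne').symm
  rw [hsumf] at hCS
  have hV2 : V^2 ≤ 2 * KL := by nlinarith
  calc V = Real.sqrt (V^2) := (Real.sqrt_sq hVnn).symm
    _ ≤ Real.sqrt (2 * KL) := Real.sqrt_le_sqrt hV2

lemma quad_bound {n : Type*} [Fintype n] [DecidableEq n] (A : Matrix n n ℂ) (u : n → ℂ)
    (hu : dotProduct (star u) u = 1) :
    ‖dotProduct (star u) (A *ᵥ u)‖ ≤ opNorm A := by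
  set x : EuclideanSpace ℂ n := (WithLp.equiv 2 _).symm u with hx
  set T := Matrix.toEuclideanCLM (𝕜 := ℂ) A with hT
  have hTx : T x = (WithLp.equiv 2 _).symm (A *ᵥ u) := by
    rw [hx, hT]
    rfl
  have hinner : (inner ℂ x (T x) : ℂ) = dotProduct (star u) (A *ᵥ u) := by
    rw [hTx, hx, WithLp.equiv_symm_apply, EuclideanSpace.inner_toLp_toLp, dotProduct_comm]
  have hxnorm : ‖x‖ = 1 := by
    have h1 : (inner ℂ x x : ℂ) = 1 := by
      rw [hx, WithLp.equiv_symm_apply, EuclideanSpace.inner_toLp_toLp, dotProduct_comm, hu]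
    have h2 := inner_self_eq_norm_sq_to_K (𝕜 := ℂ) x
    rw [h1] at h2
    have h3 : (‖x‖ : ℝ) ^ 2 = 1 := by
      simpa [← Complex.ofReal_pow] using congrArg Complex.re h2.symm
    nlinarith [norm_nonneg x]
  calc ‖dotProduct (star u) (A *ᵥ u)‖ = ‖(inner ℂ x (T x) : ℂ)‖ := by
        rw [hinner]
    _ ≤ ‖x‖ * ‖T x‖ := norm_inner_le_norm _ _
    _ ≤ ‖x‖ * (‖T‖ * ‖x‖) := by
        gcongr; exact T.le_opNorm x
    _ = ‖T‖ := by rw [hxnorm]; ring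
    _ = opNorm A := rfl

lemma trace_kron_mul {Dv Dh : ℕ} (O : Matrix (Fin Dv) (Fin Dv) ℂ)
    (M : Matrix (Fin Dv × Fin Dh) (Fin Dv × Fin Dh) ℂ) :
    ((O ⊗ₖ (1 : Matrix (Fin Dh) (Fin Dh) ℂ)) * M).trace = (O * trH M).trace := by
  simp only [Matrix.trace, Matrix.diag, Matrix.mul_apply, trH, Matrix.of_apply,
    Fintype.sum_prod_type, Matrix.kroneckerMap_apply, Matrix.one_apply, mul_ite, mul_one,
    mul_zero, ite_mul, zero_mul, Finset.mul_sum, Finset.sum_ite_eq, Finset.sum_ite_eq',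
    Finset.mem_univ, if_true]
  exact Finset.sum_congr rfl fun p _ => Finset.sum_comm

lemma trH_trace {Dv Dh : ℕ} (M : Matrix (Fin Dv × Fin Dh) (Fin Dv × Fin Dh) ℂ) :
    (trH M).trace = M.trace := by
  simp [Matrix.trace, trH, Matrix.diag, Fintype.sum_prod_type]

lemma trH_posSemidef {Dv Dh : ℕ} {ρ : Matrix (Fin Dv × Fin Dh) (Fin Dv × Fin Dh) ℂ}
    (hρ : ρ.PosSemidef) : (trH ρ).PosSemidef := by
  rw [Matrix.posSemidef_iff_dotProduct_mulVec]
  constructor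
  · ext p v
    simp only [trH, Matrix.conjTranspose_apply, Matrix.of_apply, star_sum]
    exact Finset.sum_congr rfl fun q _ => congrFun (congrFun hρ.1 (p, q)) (v, q)
  · intro x
    set y : Fin Dh → (Fin Dv × Fin Dh → ℂ) := fun q => fun pq => if pq.2 = q then x pq.1 else 0
      with hy
    have key : dotProduct (star x) ((trH ρ) *ᵥ x)
        = ∑ q, dotProduct (star (y q)) (ρ *ᵥ (y q)) := by
      have rhs : ∀ q, dotProduct (star (y q)) (ρ *ᵥ (y q))
          = ∑ p, ∑ v, (starRingEnd ℂ) (x p) * (ρ (p, q) (v, q) * x v) := by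
        intro q
        simp only [dotProduct, Matrix.mulVec, Fintype.sum_prod_type, hy, Pi.star_apply,
          Complex.star_def, apply_ite (starRingEnd ℂ), map_zero, ite_mul, zero_mul, mul_ite, mul_zero,
          Finset.sum_ite_eq', Finset.mem_univ, if_true, Finset.mul_sum]
        apply Finset.sum_congr rfl
        intro p _
        rw [Finset.sum_comm]
        simp
      have lhs : dotProduct (star x) ((trH ρ) *ᵥ x)
          = ∑ p, ∑ v, ∑ q, (starRingEnd ℂ) (x p) * (ρ (p, q) (v, q) * x v) := by
        simp [dotProduct, Matrix.mulVec, trH, Finset.mul_sum, Finset.sum_mul,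
          mul_comm, mul_left_comm]
      rw [lhs]
      have swap1 : (∑ p, ∑ v, ∑ q, (starRingEnd ℂ) (x p) * (ρ (p, q) (v, q) * x v))
          = ∑ p, ∑ q, ∑ v, (starRingEnd ℂ) (x p) * (ρ (p, q) (v, q) * x v) :=
        Finset.sum_congr rfl fun p _ => Finset.sum_comm
      rw [swap1, Finset.sum_comm]
      exact Finset.sum_congr rfl fun q _ => (rhs q).symm
    rw [key]
    exact Finset.sum_nonneg fun q _ => hρ.dotProduct_mulVec_nonneg (y q)

lemma herm_trace_sum_eig {n : ℕ} (σ : Matrix (Fin n) (Fin n) ℂ) (hσ : σ.IsHermitian) :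
    σ.trace = ∑ i, (hσ.eigenvalues i : ℂ) := by
  conv_lhs => rw [hσ.spectral_theorem, Unitary.conjStarAlgAut_apply]
  rw [Matrix.trace_mul_cycle]
  rw [Matrix.mem_unitaryGroup_iff'.mp (hσ.eigenvectorUnitary).2, Matrix.one_mul,
    Matrix.trace_diagonal]
  simp

lemma herm_trace_bound {n : ℕ} (σ : Matrix (Fin n) (Fin n) ℂ) (hps : σ.PosSemidef)
    (O : Matrix (Fin n) (Fin n) ℂ) (c : ℝ) :
    ‖(O * (σ - (c:ℂ) • 1)).trace‖ ≤
      opNorm O * ∑ i, |hps.1.eigenvalues i - c| := by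
  set hσ : σ.IsHermitian := hps.1 with hhσ
  set U : Matrix (Fin n) (Fin n) ℂ := (hσ.eigenvectorUnitary : Matrix (Fin n) (Fin n) ℂ)
    with hUdef
  set lam : Fin n → ℝ := hσ.eigenvalues with hlam
  have hU : star U * U = 1 := Matrix.mem_unitaryGroup_iff'.mp (hσ.eigenvectorUnitary).2
  have hU' : U * star U = 1 := Matrix.mem_unitaryGroup_iff.mp (hσ.eigenvectorUnitary).2
  have hdec : σ - (c:ℂ) • 1 = U * Matrix.diagonal (fun i => (lam i : ℂ) - c) * star U := by
    conv_lhs => rw [hσ.spectral_theorem, Unitary.conjStarAlgAut_apply]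
    have h1 : ((c:ℂ) • (1 : Matrix (Fin n) (Fin n) ℂ))
        = U * ((c:ℂ) • 1) * star U := by
      rw [Matrix.mul_smul, Matrix.mul_one, Matrix.smul_mul, hU']
    rw [h1, ← Matrix.sub_mul, ← Matrix.mul_sub]
    congr 2
    ext i j
    by_cases h : i = j <;> simp [h, Matrix.diagonal, Matrix.one_apply, hlam]
  have htr : (O * (σ - (c:ℂ) • 1)).trace
      = ∑ i, (star U * O * U) i i * ((lam i : ℂ) - c) := by
    rw [hdec]
    simp only [← Matrix.mul_assoc]
    rw [Matrix.trace_mul_comm]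
    simp only [← Matrix.mul_assoc]
    simp [Matrix.trace, Matrix.diag, Matrix.mul_diagonal]
  rw [htr]
  have habs : ∀ i : Fin n, ‖(star U * O * U) i i‖ ≤ opNorm O := by
    intro i
    have hcol : (star U * O * U) i i
        = dotProduct (star (fun k => U k i)) (O *ᵥ (fun k => U k i)) := by
      simp only [Matrix.mul_apply, Matrix.star_apply, dotProduct, Matrix.mulVec,
        Pi.star_apply, Finset.sum_mul, Finset.mul_sum]
      rw [Finset.sum_comm]
      apply Finset.sum_congr rfl
      intro j _
      apply Finset.sum_congr rfl
      intro k _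
      ring
    have hunit : dotProduct (star (fun k => U k i)) (fun k => U k i) = 1 := by
      have : dotProduct (star (fun k => U k i)) (fun k => U k i)
          = (star U * U) i i := by
        simp [Matrix.mul_apply, Matrix.star_apply, dotProduct]
      rw [this, hU, Matrix.one_apply_eq]
    rw [hcol]
    exact quad_bound O _ hunit
  calc ‖∑ i, (star U * O * U) i i * ((lam i : ℂ) - c)‖
      ≤ ∑ i, ‖(star U * O * U) i i * ((lam i : ℂ) - c)‖ :=
        norm_sum_le _ _
    _ = ∑ i, ‖(star U * O * U) i i‖ * |lam i - c| := by
        apply Finset.sum_congr rfl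
        intro i _
        rw [norm_mul]
        congr 1
        rw [show ((lam i : ℂ) - c) = ((lam i - c : ℝ) : ℂ) by push_cast; ring,
          Complex.norm_real, Real.norm_eq_abs]
    _ ≤ ∑ i, opNorm O * |lam i - c| :=
        Finset.sum_le_sum fun i _ =>
          mul_le_mul_of_nonneg_right (habs i) (abs_nonneg _)
    _ = opNorm O * ∑ i, |lam i - c| := by rw [Finset.mul_sum]

end PinskerAux

/-- Proposition 1 of the paper: for a density matrix `ρ` on the
visible ⊗ hidden space and a Hermitian visible observable `O`,
`|Tr((O ⊗ I)(ρ - I/(Dv·Dh)))| ≤ ‖O‖_∞ √(2 (log Dv - S(Tr_h ρ)))`. -/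
theorem visible_observable_bound_entropy (Dv Dh : ℕ)
    (ρ : Matrix (Fin Dv × Fin Dh) (Fin Dv × Fin Dh) ℂ)
    (hρ : ρ.PosSemidef) (hρtr : ρ.trace = 1)
    (O : Matrix (Fin Dv) (Fin Dv) ℂ) (hO : O.IsHermitian) :
    ‖((O ⊗ₖ (1 : Matrix (Fin Dh) (Fin Dh) ℂ)) *
        (ρ - (((Dv : ℂ) * (Dh : ℂ)))⁻¹ • 1)).trace‖ ≤
      opNorm O * Real.sqrt (2 * (Real.log Dv - vNEntropy (trH ρ))) := by
  classical
  -- nondegeneracy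
  have hDh : Dh ≠ 0 := by
    rintro rfl
    simp [Matrix.trace] at hρtr
  have hDv : Dv ≠ 0 := by
    rintro rfl
    simp [Matrix.trace] at hρtr
  have hDhC : (Dh:ℂ) ≠ 0 := Nat.cast_ne_zero.mpr hDh
  have hDvC : (Dv:ℂ) ≠ 0 := Nat.cast_ne_zero.mpr hDv
  set σ := trH ρ with hσdef
  have hps : σ.PosSemidef := trH_posSemidef hρ
  set hσ : σ.IsHermitian := hps.1 with hhσ
  set lam : Fin Dv → ℝ := hσ.eigenvalues with hlamdef
  -- trace identity
  have hch : trH (ρ - (((Dv : ℂ) * (Dh : ℂ)))⁻¹ • 1) = σ - ((Dv:ℂ))⁻¹ • 1 := by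
    ext p v
    simp only [trH, Matrix.of_apply, Matrix.sub_apply, Matrix.smul_apply, Matrix.one_apply,
      smul_eq_mul, Finset.sum_sub_distrib, hσdef]
    congr 1
    by_cases h : p = v
    · subst h
      subst_eqs
      simp [Finset.sum_const, Finset.card_univ, mul_inv]
      rw [← mul_assoc, mul_inv_cancel₀ hDhC, one_mul]
    · simp [Prod.ext_iff, h]
  have htr0 : ((O ⊗ₖ (1 : Matrix (Fin Dh) (Fin Dh) ℂ)) *
      (ρ - (((Dv : ℂ) * (Dh : ℂ)))⁻¹ • 1)).trace
      = (O * (σ - ((Dv:ℂ))⁻¹ • 1)).trace := by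
    rw [trace_kron_mul, hch]
  -- eigenvalue facts
  have h0 : ∀ i, 0 ≤ lam i := fun i => hps.eigenvalues_nonneg i
  have h1 : ∑ i, lam i = 1 := by
    have h2 := herm_trace_sum_eig σ hσ
    rw [trH_trace, hρtr] at h2
    exact_mod_cast h2.symm
  have hDvpos : 0 < Dv := Nat.pos_of_ne_zero hDv
  -- entropy rewriting
  have hent : vNEntropy σ = ∑ i, Real.negMulLog (lam i) := by
    rw [vNEntropy, dif_pos hσ]
  -- main chain
  rw [htr0]
  have hb := herm_trace_bound σ hps O ((Dv:ℝ)⁻¹)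
  have hcast : (((Dv:ℝ)⁻¹ : ℝ) : ℂ) = ((Dv:ℂ))⁻¹ := by push_cast; ring
  rw [hcast] at hb
  refine le_trans hb ?_
  have hpin := pinsker_uniform hDvpos lam h0 h1
  rw [hent]
  exact mul_le_mul_of_nonneg_left hpin (norm_nonneg _)
end

section
/- Let φ = U·e₀ be a Haar-random unit vector in C^D, i.e. U is distributed according to the Haar probability measure on the unitary group U(D) and e₀ is a fixed standard basis vector. Then E[ |φ⟩⟨φ| ⊗ |φ⟩⟨φ| ] = (I + F)/(D·(D+1)), where F is the swap matrix on C^D ⊗ C^D and |φ⟩⟨φ| denotes the rank-one projector onto φ. -/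
open Matrix BigOperators MeasureTheory
open scoped Kronecker

noncomputable instance matrixMeasurableSpace {n m : Type*} : MeasurableSpace (Matrix n m ℂ) :=
  inferInstanceAs (MeasurableSpace (n → m → ℂ))

/-- The rank-one projector `|φ⟩⟨φ|` onto a vector `φ`. -/
noncomputable def proj {n : Type*} (φ : n → ℂ) : Matrix n n ℂ :=
  Matrix.of fun i j => φ i * star (φ j)

/-- The swap (flip) matrix `F` on `ℂ^D ⊗ ℂ^D`, with entries
`F((a,b),(c,d)) = δ_{a,d} δ_{b,c}`. -/
def swapMat (D : ℕ) : Matrix (Fin D × Fin D) (Fin D × Fin D) ℂ :=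
  Matrix.of fun x y => if x.1 = y.2 ∧ x.2 = y.1 then 1 else 0

open scoped Kronecker

namespace HaarSM

abbrev UG (D : ℕ) := Matrix.unitaryGroup (Fin D) ℂ

variable {D : ℕ}

noncomputable def ent (i j : Fin D) (U : UG D) : ℂ := (U : Matrix (Fin D) (Fin D) ℂ) i j

lemma measurable_ent (i j : Fin D) : Measurable (ent i j) := by
  have h1 : Measurable (fun U : UG D => (U : Matrix (Fin D) (Fin D) ℂ)) :=
    measurable_subtype_coe
  exact (measurable_pi_apply j).comp ((measurable_pi_apply i).comp h1)

lemma sum_normSq (U : UG D) (j : Fin D) :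
    ∑ i, Complex.normSq ((U : Matrix (Fin D) (Fin D) ℂ) i j) = 1 := by
  have h := U.2.1
  have h2 := congrFun (congrFun h j) j
  rw [Matrix.mul_apply] at h2
  simp only [Matrix.star_apply, Matrix.one_apply_eq] at h2
  have h3 : (↑(∑ i, Complex.normSq ((U : Matrix (Fin D) (Fin D) ℂ) i j)) : ℂ) = 1 := by
    push_cast
    rw [← h2]
    congr 1
    ext i
    rw [Complex.normSq_eq_conj_mul_self]
    rfl
  exact_mod_cast h3

lemma ent_norm_le (i j : Fin D) (U : UG D) : ‖ent i j U‖ ≤ 1 := by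
  have h := sum_normSq U j
  have h1 : Complex.normSq ((U : Matrix (Fin D) (Fin D) ℂ) i j) ≤ 1 := by
    rw [← h]
    exact Finset.single_le_sum (f := fun k => Complex.normSq ((U : Matrix (Fin D) (Fin D) ℂ) k j)) (fun k _ => Complex.normSq_nonneg _) (Finset.mem_univ i)
  have h2 : ‖ent i j U‖ ^ 2 ≤ 1 := by
    rw [show ‖ent i j U‖ ^ 2 = Complex.normSq ((U : Matrix (Fin D) (Fin D) ℂ) i j) by
      exact Complex.sq_norm _]
    exact h1
  nlinarith [norm_nonneg (ent i j U)]


/-- The entrywise integrand. -/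
noncomputable def itg (e a b c d : Fin D) (U : UG D) : ℂ :=
  (ent a e U * star (ent c e U)) * (ent b e U * star (ent d e U))

lemma measurable_itg (e a b c d : Fin D) : Measurable (itg e a b c d) := by
  exact ((measurable_ent a e).mul (Complex.continuous_conj.measurable.comp (measurable_ent c e))).mul
    ((measurable_ent b e).mul (Complex.continuous_conj.measurable.comp (measurable_ent d e)))

lemma norm_itg_le (e a b c d : Fin D) (U : UG D) : ‖itg e a b c d U‖ ≤ 1 := by
  unfold itg
  have := ent_norm_le a e U
  have := ent_norm_le b e U
  have := ent_norm_le c e U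
  have := ent_norm_le d e U
  rw [norm_mul, norm_mul, norm_mul, norm_star, norm_star]
  exact mul_le_one₀ (mul_le_one₀ (ent_norm_le a e U) (norm_nonneg _) (ent_norm_le c e U))
    (mul_nonneg (norm_nonneg _) (norm_nonneg _))
    (mul_le_one₀ (ent_norm_le b e U) (norm_nonneg _) (ent_norm_le d e U))

variable {μ : Measure (UG D)} [IsProbabilityMeasure μ]

lemma integrable_itg (e a b c d : Fin D) : Integrable (itg e a b c d) μ :=
  ⟨(measurable_itg e a b c d).aestronglyMeasurable,
    MeasureTheory.HasFiniteIntegral.of_bounded (C := 1) (ae_of_all _ (norm_itg_le e a b c d))⟩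

/-- The second-moment integral. -/
noncomputable def mI (μ : Measure (UG D)) (e a b c d : Fin D) : ℂ :=
  ∫ U, itg e a b c d U ∂μ

lemma measurable_mul_left (V : UG D) : Measurable fun U : UG D => V * U := by
  have h : Measurable fun U : UG D => (V : Matrix (Fin D) (Fin D) ℂ) * (U : Matrix (Fin D) (Fin D) ℂ) := by
    apply measurable_pi_lambda; intro i; apply measurable_pi_lambda; intro j
    simp only [Matrix.mul_apply]
    exact Finset.measurable_sum _ fun k _ => measurable_const.mul (measurable_ent k j)
  exact h.subtype_mk

omit [IsProbabilityMeasure μ] in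
lemma integral_inv (hμ : ∀ V : UG D, Measure.map (fun U => V * U) μ = μ)
    (f : UG D → ℂ) (hf : Measurable f) (V : UG D) :
    ∫ U, f U ∂μ = ∫ U, f (V * U) ∂μ := by
  conv_lhs => rw [← hμ V]
  rw [MeasureTheory.integral_map (measurable_mul_left V).aemeasurable hf.aestronglyMeasurable]

lemma coe_mul (V U : UG D) :
    ((V * U : UG D) : Matrix (Fin D) (Fin D) ℂ) = (V : Matrix (Fin D) (Fin D) ℂ) * U := rfl

lemma mI_inv (hμ : ∀ V : UG D, Measure.map (fun U => V * U) μ = μ)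
    (e a b c d : Fin D) (V : UG D) :
    mI μ e a b c d = ∫ U, itg e a b c d (V * U) ∂μ :=
  integral_inv hμ _ (measurable_itg e a b c d) V


/-- Diagonal phase unitary: `I` at position `k`, `1` elsewhere. -/
noncomputable def dU (k : Fin D) : UG D := by
  have key : ∀ (z w : Fin D → ℂ), (∀ j, z j * w j = 1) →
      Matrix.diagonal z * Matrix.diagonal w = (1 : Matrix (Fin D) (Fin D) ℂ) := by
    intro z w hzw
    rw [Matrix.diagonal_mul_diagonal]
    have : (fun j => z j * w j) = fun _ => (1 : ℂ) := funext hzw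
    rw [this, Matrix.diagonal_one]
  refine ⟨Matrix.diagonal (fun j => if j = k then Complex.I else 1), ?_, ?_⟩
  · rw [Matrix.star_eq_conjTranspose, Matrix.diagonal_conjTranspose]
    apply key
    intro j
    by_cases hj : j = k <;> simp [hj, Complex.conj_I, Complex.I_mul_I, neg_mul, neg_neg]
  · rw [Matrix.star_eq_conjTranspose, Matrix.diagonal_conjTranspose]
    apply key
    intro j
    by_cases hj : j = k <;> simp [hj, Complex.conj_I, Complex.I_mul_I]

lemma ent_dU_mul (k i e : Fin D) (U : UG D) :
    ent i e (dU k * U) = (if i = k then Complex.I else 1) * ent i e U := by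
  show ((dU k * U : UG D) : Matrix (Fin D) (Fin D) ℂ) i e = _
  rw [coe_mul]
  show (Matrix.diagonal (fun j => if j = k then Complex.I else 1) *
    (U : Matrix (Fin D) (Fin D) ℂ)) i e = _
  rw [Matrix.diagonal_mul]
  rfl

lemma mI_eq_zero_of_phase (hμ : ∀ V : UG D, Measure.map (fun U => V * U) μ = μ)
    (e a b c d k : Fin D)
    (h : ((if a = k then Complex.I else 1) * star (if c = k then Complex.I else 1)) *
      ((if b = k then Complex.I else 1) * star (if d = k then Complex.I else 1)) ≠ 1) :
    mI μ e a b c d = 0 := by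
  set s : ℂ := ((if a = k then Complex.I else 1) * star (if c = k then Complex.I else 1)) *
      ((if b = k then Complex.I else 1) * star (if d = k then Complex.I else 1)) with hs
  have key : mI μ e a b c d = s * mI μ e a b c d := by
    conv_lhs => rw [mI_inv hμ e a b c d (dU k)]
    have hpt : ∀ U : UG D, itg e a b c d (dU k * U) = s * itg e a b c d U := by
      intro U
      unfold itg
      rw [ent_dU_mul, ent_dU_mul, ent_dU_mul, ent_dU_mul, hs]
      simp only [star_mul']
      ring
    calc ∫ U, itg e a b c d (dU k * U) ∂μ = ∫ U, s * itg e a b c d U ∂μ := by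
          exact integral_congr_ae (ae_of_all _ hpt)
      _ = s * ∫ U, itg e a b c d U ∂μ := by
          simpa [smul_eq_mul] using integral_smul s (μ := μ) (itg e a b c d)
      _ = s * mI μ e a b c d := rfl
  have h2 : (1 - s) * mI μ e a b c d = 0 := by linear_combination key
  rcases mul_eq_zero.mp h2 with h3 | h3
  · exact absurd (show s = 1 by linear_combination -h3) h
  · exact h3

lemma mI_zero (hμ : ∀ V : UG D, Measure.map (fun U => V * U) μ = μ)
    (e a b c d : Fin D) (h1 : ¬(a = c ∧ b = d)) (h2 : ¬(a = d ∧ b = c)) :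
    mI μ e a b c d = 0 := by
  by_cases hac : a = c
  · have hbd : b ≠ d := fun h => h1 ⟨hac, h⟩
    apply mI_eq_zero_of_phase hμ e a b c d b
    subst hac
    have hdb : ¬d = b := fun h => hbd h.symm
    by_cases hab : a = b
    · simp only [if_pos hab, if_pos rfl, if_neg hdb, Complex.star_def, Complex.conj_I,
        _root_.map_one]
      norm_num [Complex.ext_iff]
    · simp only [if_neg hab, if_pos rfl, if_neg hdb, Complex.star_def, Complex.conj_I,
        _root_.map_one]
      norm_num [Complex.ext_iff]
  · by_cases had : a = d
    · have hbc : b ≠ c := fun h => h2 ⟨had, h⟩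
      subst had
      by_cases hab : a = b
      · apply mI_eq_zero_of_phase hμ e a b c a c
        subst hab
        simp only [if_pos rfl, if_neg hac, Complex.star_def, Complex.conj_I, _root_.map_one]
        norm_num [Complex.ext_iff]
      · apply mI_eq_zero_of_phase hμ e a b c a b
        have hcb : ¬c = b := fun h => hbc h.symm
        have hab' : ¬a = b := hab
        simp only [if_pos rfl, if_neg hab', if_neg hcb, Complex.star_def, Complex.conj_I,
          _root_.map_one]
        norm_num [Complex.ext_iff]
    · apply mI_eq_zero_of_phase hμ e a b c d a
      have hca : ¬c = a := fun h => hac h.symm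
      have hda : ¬d = a := fun h => had h.symm
      by_cases hba : b = a
      · simp only [if_pos rfl, if_pos hba, if_neg hca, if_neg hda, Complex.star_def,
          Complex.conj_I, _root_.map_one]
        norm_num [Complex.ext_iff]
      · simp only [if_pos rfl, if_neg hba, if_neg hca, if_neg hda, Complex.star_def,
          Complex.conj_I, _root_.map_one]
        norm_num [Complex.ext_iff]

section Perm
open Equiv

lemma star_permMatrix (σ : Equiv.Perm (Fin D)) :
    star (σ.toPEquiv.toMatrix : Matrix (Fin D) (Fin D) ℂ) = (σ⁻¹).toPEquiv.toMatrix := by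
  ext i j
  rw [Matrix.star_eq_conjTranspose, Matrix.conjTranspose_apply,
    PEquiv.toMatrix_toPEquiv_eq, PEquiv.toMatrix_toPEquiv_eq,
    Matrix.submatrix_apply, Matrix.submatrix_apply, id_eq, id_eq,
    Matrix.one_apply, Matrix.one_apply]
  by_cases h : σ j = i
  · rw [if_pos h, if_pos (show σ⁻¹ i = j by simp [← h])]
    simp
  · rw [if_neg h, if_neg (show ¬σ⁻¹ i = j from fun hh => h (by simp [← hh]))]
    simp

lemma permMatrix_mem (σ : Equiv.Perm (Fin D)) :
    (σ.toPEquiv.toMatrix : Matrix (Fin D) (Fin D) ℂ) ∈ Matrix.unitaryGroup (Fin D) ℂ := by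
  constructor
  · rw [star_permMatrix, PEquiv.toMatrix_toPEquiv_mul]
    ext i j
    rw [Matrix.submatrix_apply, PEquiv.toMatrix_toPEquiv_eq, Matrix.submatrix_apply]
    simp [Matrix.one_apply]
  · rw [star_permMatrix, PEquiv.mul_toMatrix_toPEquiv]
    ext i j
    rw [Matrix.submatrix_apply, PEquiv.toMatrix_toPEquiv_eq, Matrix.submatrix_apply]
    simp [Matrix.one_apply, Equiv.Perm.inv_def, Equiv.symm_symm, EmbeddingLike.apply_eq_iff_eq]

/-- The permutation unitary. -/
noncomputable def pU (σ : Equiv.Perm (Fin D)) : UG D := ⟨σ.toPEquiv.toMatrix, permMatrix_mem σ⟩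

lemma ent_pU_mul (σ : Equiv.Perm (Fin D)) (i e : Fin D) (U : UG D) :
    ent i e (pU σ * U) = ent (σ i) e U := by
  show ((pU σ * U : UG D) : Matrix (Fin D) (Fin D) ℂ) i e = _
  rw [coe_mul]
  show ((σ.toPEquiv.toMatrix : Matrix (Fin D) (Fin D) ℂ) * (U : Matrix (Fin D) (Fin D) ℂ)) i e = _
  rw [PEquiv.toMatrix_toPEquiv_mul]
  rfl

lemma mI_perm (hμ : ∀ V : UG D, Measure.map (fun U => V * U) μ = μ)
    (e a b c d : Fin D) (σ : Equiv.Perm (Fin D)) :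
    mI μ e a b c d = mI μ e (σ a) (σ b) (σ c) (σ d) := by
  rw [mI_inv hμ e a b c d (pU σ)]
  apply integral_congr_ae
  apply ae_of_all
  intro U
  simp only [itg, ent_pU_mul]

lemma exists_perm {a b a' b' : Fin D} (hab : a ≠ b) (hab' : a' ≠ b') :
    ∃ σ : Equiv.Perm (Fin D), σ a = a' ∧ σ b = b' := by
  set c := Equiv.swap a a' b with hc
  have hca' : c ≠ a' := by
    intro h
    apply hab
    have : Equiv.swap a a' b = Equiv.swap a a' a := by
      rw [Equiv.swap_apply_left]; exact h
    exact ((Equiv.swap a a').injective this).symm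
  refine ⟨(Equiv.swap c b') * (Equiv.swap a a'), ?_, ?_⟩
  · rw [Equiv.Perm.mul_apply, Equiv.swap_apply_left]
    exact Equiv.swap_apply_of_ne_of_ne (Ne.symm hca') hab' 
  · rw [Equiv.Perm.mul_apply, ← hc, Equiv.swap_apply_left]

lemma mI_diag_const (hμ : ∀ V : UG D, Measure.map (fun U => V * U) μ = μ)
    (e a a' : Fin D) : mI μ e a a a a = mI μ e a' a' a' a' := by
  have := mI_perm hμ e a a a a (Equiv.swap a a')
  rwa [Equiv.swap_apply_left] at this

lemma mI_off_const (hμ : ∀ V : UG D, Measure.map (fun U => V * U) μ = μ)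
    (e : Fin D) {a b a' b' : Fin D} (hab : a ≠ b) (hab' : a' ≠ b') :
    mI μ e a b a b = mI μ e a' b' a' b' := by
  obtain ⟨σ, h1, h2⟩ := exists_perm hab hab'
  have := mI_perm hμ e a b a b σ
  rwa [h1, h2] at this

end Perm

section Had

/-- `1/√2` as a complex number. -/
noncomputable def cC : ℂ := ((Real.sqrt 2)⁻¹ : ℝ)

lemma cC_mul_cC : cC * cC = (2 : ℂ)⁻¹ := by
  unfold cC
  rw [← Complex.ofReal_mul, ← mul_inv, Real.mul_self_sqrt (by norm_num : (0:ℝ) ≤ 2)]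
  push_cast
  rfl

lemma star_cC : star cC = cC := by
  unfold cC
  rw [Complex.star_def, Complex.conj_ofReal]

/-- Symmetric part of the Hadamard-type matrix. -/
noncomputable def SM (p q : Fin D) : Matrix (Fin D) (Fin D) ℂ :=
  Matrix.single p p 1 + Matrix.single p q 1 +
    Matrix.single q p 1 - Matrix.single q q 1

noncomputable def TM (p q : Fin D) : Matrix (Fin D) (Fin D) ℂ :=
  Matrix.single p p 1 + Matrix.single q q 1

/-- The Hadamard-type unitary mixing coordinates `p` and `q`. -/
noncomputable def hadM (p q : Fin D) : Matrix (Fin D) (Fin D) ℂ :=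
  cC • SM p q + (1 - TM p q)

lemma stdBasis_conjT (i j : Fin D) :
    (Matrix.single i j (1:ℂ))ᴴ = Matrix.single j i 1 := by
  ext a b
  simp only [Matrix.conjTranspose_apply, Matrix.single, Matrix.of_apply]
  by_cases h1 : i = b <;> by_cases h2 : j = a <;> simp [h1, h2]

variable {p q : Fin D}

private lemma zpq (hpq : p ≠ q) : ∀ i l : Fin D,
    Matrix.single i p (1:ℂ) * Matrix.single q l 1 = 0 :=
  fun i l => Matrix.single_mul_single_of_ne (c := 1) i p q hpq 1

private lemma zqp (hpq : p ≠ q) : ∀ i l : Fin D,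
    Matrix.single i q (1:ℂ) * Matrix.single p l 1 = 0 :=
  fun i l => Matrix.single_mul_single_of_ne (c := 1) i q p (Ne.symm hpq) 1

private lemma sprod : ∀ i j l : Fin D,
    Matrix.single i j (1:ℂ) * Matrix.single j l 1 = Matrix.single i l 1 := by
  intro i j l
  rw [Matrix.single_mul_single_same, one_mul]

lemma SM_mul_SM (hpq : p ≠ q) : SM p q * SM p q = (2:ℂ) • TM p q := by
  unfold SM TM
  simp only [add_mul, sub_mul, mul_add, mul_sub, sprod, zpq hpq, zqp hpq, two_smul,
    add_zero, zero_add, sub_zero]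
  abel

lemma SM_mul_TM (hpq : p ≠ q) : SM p q * TM p q = SM p q := by
  unfold SM TM
  simp only [add_mul, sub_mul, mul_add, mul_sub, sprod, zpq hpq, zqp hpq,
    add_zero, zero_add, sub_zero]
  abel

lemma TM_mul_SM (hpq : p ≠ q) : TM p q * SM p q = SM p q := by
  unfold SM TM
  simp only [add_mul, sub_mul, mul_add, mul_sub, sprod, zpq hpq, zqp hpq,
    add_zero, zero_add, sub_zero]

lemma TM_mul_TM (hpq : p ≠ q) : TM p q * TM p q = TM p q := by
  unfold TM
  simp only [add_mul, mul_add, sprod, zpq hpq, zqp hpq, add_zero, zero_add]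

lemma hadM_mul_hadM (hpq : p ≠ q) : hadM p q * hadM p q = 1 := by
  unfold hadM
  rw [add_mul, mul_add, mul_add]
  rw [Matrix.smul_mul, Matrix.mul_smul, Matrix.smul_mul, Matrix.mul_smul]
  rw [SM_mul_SM hpq]
  rw [mul_one_sub, SM_mul_TM hpq, sub_self, one_sub_mul, TM_mul_SM hpq, sub_self]
  rw [mul_one_sub, one_sub_mul, TM_mul_TM hpq]
  rw [smul_smul, smul_smul, cC_mul_cC]
  rw [show ((2:ℂ)⁻¹ * 2) = 1 by norm_num, one_smul]
  simp only [smul_zero]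
  abel

lemma star_hadM : star (hadM p q) = hadM p q := by
  rw [Matrix.star_eq_conjTranspose]
  unfold hadM SM TM
  simp only [Matrix.conjTranspose_add, Matrix.conjTranspose_sub, Matrix.conjTranspose_smul,
    Matrix.conjTranspose_one, stdBasis_conjT, star_cC]
  abel

/-- The Hadamard unitary as an element of the unitary group. -/
noncomputable def hadU (p q : Fin D) (hpq : p ≠ q) : UG D :=
  ⟨hadM p q, by rw [star_hadM]; exact hadM_mul_hadM hpq,
    by rw [star_hadM]; exact hadM_mul_hadM hpq⟩

lemma ent_hadU_mul (hpq : p ≠ q) (e : Fin D) (U : UG D) :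
    ent p e (hadU p q hpq * U) = cC * (ent p e U + ent q e U) := by
  show ((hadU p q hpq * U : UG D) : Matrix (Fin D) (Fin D) ℂ) p e = _
  rw [coe_mul]
  show (hadM p q * (U : Matrix (Fin D) (Fin D) ℂ)) p e = _
  unfold hadM SM TM
  simp only [Matrix.add_mul, Matrix.sub_mul, Matrix.smul_mul, Matrix.one_mul]
  simp only [Matrix.add_apply, Matrix.sub_apply, Matrix.smul_apply,
    Matrix.single_mul_apply_same,
    Matrix.single_mul_apply_of_ne (c := (1:ℂ)) q p p e hpq,
    Matrix.single_mul_apply_of_ne (c := (1:ℂ)) q q p e hpq, one_mul,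
    smul_eq_mul]
  show cC * ((U : Matrix (Fin D) (Fin D) ℂ) p e + (U : Matrix (Fin D) (Fin D) ℂ) q e + 0 - 0) +
      ((U : Matrix (Fin D) (Fin D) ℂ) p e -
        ((U : Matrix (Fin D) (Fin D) ℂ) p e + 0)) = _
  unfold ent
  ring

end Had

lemma alpha_two_beta (hμ : ∀ V : UG D, Measure.map (fun U => V * U) μ = μ)
    (e : Fin D) {p q : Fin D} (hpq : p ≠ q) :
    mI μ e p p p p = 2 * mI μ e p q p q := by
  have hpt : ∀ U : UG D, itg e p p p p (hadU p q hpq * U) =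
      (4:ℂ)⁻¹ * ((itg e p p p p U + itg e q q q q U + 4 * itg e p q p q U) +
        (2 * itg e p p p q U + 2 * itg e p q p p U + 2 * itg e p q q q U +
          2 * itg e q q p q U + itg e p p q q U + itg e q q p p U)) := by
    intro U
    unfold itg
    rw [ent_hadU_mul hpq e U]
    rw [show star (cC * (ent p e U + ent q e U)) =
        cC * (star (ent p e U) + star (ent q e U)) by
      rw [star_mul', star_add, star_cC]]
    linear_combination ((cC * cC + (2:ℂ)⁻¹) *
      (((ent p e U + ent q e U) * (star (ent p e U) + star (ent q e U)))^2)) * cC_mul_cC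
  have I : ∀ a b c d : Fin D, Integrable (itg e a b c d) μ :=
    fun a b c d => integrable_itg e a b c d
  have h := mI_inv hμ e p p p p (hadU p q hpq)
  rw [integral_congr_ae (ae_of_all _ hpt)] at h
  rw [MeasureTheory.integral_const_mul] at h
  have J1 : Integrable (fun U : UG D => 4 * itg e p q p q U) μ := (I p q p q).const_mul 4
  have J2 : Integrable (fun U : UG D => itg e p p p p U + itg e q q q q U) μ :=
    (I p p p p).add (I q q q q)
  have J3 : Integrable (fun U : UG D =>
      itg e p p p p U + itg e q q q q U + 4 * itg e p q p q U) μ := J2.add J1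
  have K1 : Integrable (fun U : UG D => 2 * itg e p p p q U) μ := (I p p p q).const_mul 2
  have K2 : Integrable (fun U : UG D => 2 * itg e p q p p U) μ := (I p q p p).const_mul 2
  have K3 : Integrable (fun U : UG D => 2 * itg e p q q q U) μ := (I p q q q).const_mul 2
  have K4 : Integrable (fun U : UG D => 2 * itg e q q p q U) μ := (I q q p q).const_mul 2
  have K12 : Integrable (fun U : UG D =>
      2 * itg e p p p q U + 2 * itg e p q p p U) μ := K1.add K2
  have K123 : Integrable (fun U : UG D =>
      2 * itg e p p p q U + 2 * itg e p q p p U + 2 * itg e p q q q U) μ := K12.add K3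
  have K1234 : Integrable (fun U : UG D =>
      2 * itg e p p p q U + 2 * itg e p q p p U + 2 * itg e p q q q U +
        2 * itg e q q p q U) μ := K123.add K4
  have K5 : Integrable (fun U : UG D =>
      2 * itg e p p p q U + 2 * itg e p q p p U + 2 * itg e p q q q U +
        2 * itg e q q p q U + itg e p p q q U) μ := K1234.add (I p p q q)
  have K6 : Integrable (fun U : UG D =>
      2 * itg e p p p q U + 2 * itg e p q p p U + 2 * itg e p q q q U +
        2 * itg e q q p q U + itg e p p q q U + itg e q q p p U) μ := K5.add (I q q p p)
  rw [integral_add J3 K6, integral_add J2 J1,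
    integral_add (I p p p p) (I q q q q), integral_add K5 (I q q p p),
    integral_add K1234 (I p p q q), integral_add K123 K4, integral_add K12 K3,
    integral_add K1 K2, MeasureTheory.integral_const_mul, MeasureTheory.integral_const_mul,
    MeasureTheory.integral_const_mul, MeasureTheory.integral_const_mul,
    MeasureTheory.integral_const_mul] at h
  have hz1 : (∫ U, itg e p p p q U ∂μ) = 0 :=
    mI_zero hμ e p p p q (fun hh => hpq hh.2) (fun hh => hpq hh.1)
  have hz2 : (∫ U, itg e p q p p U ∂μ) = 0 :=
    mI_zero hμ e p q p p (fun hh => hpq hh.2.symm) (fun hh => hpq hh.2.symm)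
  have hz3 : (∫ U, itg e p q q q U ∂μ) = 0 :=
    mI_zero hμ e p q q q (fun hh => hpq hh.1) (fun hh => hpq hh.1)
  have hz4 : (∫ U, itg e q q p q U ∂μ) = 0 :=
    mI_zero hμ e q q p q (fun hh => hpq hh.1.symm) (fun hh => hpq hh.2.symm)
  have hz5 : (∫ U, itg e p p q q U ∂μ) = 0 :=
    mI_zero hμ e p p q q (fun hh => hpq hh.1) (fun hh => hpq hh.1)
  have hz6 : (∫ U, itg e q q p p U ∂μ) = 0 :=
    mI_zero hμ e q q p p (fun hh => hpq hh.1.symm) (fun hh => hpq hh.1.symm)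
  have hqq : (∫ U, itg e q q q q U ∂μ) = ∫ U, itg e p p p p U ∂μ :=
    mI_diag_const hμ e q p
  rw [hz1, hz2, hz3, hz4, hz5, hz6, hqq] at h
  unfold mI at h ⊢
  linear_combination 2 * h

lemma sum_itg_one (e : Fin D) (U : UG D) :
    ∑ a, ∑ b, itg e a b a b U = 1 := by
  have h2 := congrFun (congrFun U.2.1 e) e
  rw [Matrix.mul_apply] at h2
  simp only [Matrix.one_apply_eq] at h2
  have hU : ∑ i, ent i e U * star (ent i e U) = 1 := by
    rw [← h2]
    apply Finset.sum_congr rfl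
    intro i _
    rw [Matrix.star_apply]
    exact mul_comm _ _
  calc ∑ a, ∑ b, itg e a b a b U
      = (∑ a, ent a e U * star (ent a e U)) * (∑ b, ent b e U * star (ent b e U)) := by
        rw [Finset.sum_mul_sum]
        rfl
      _ = 1 := by rw [hU]; norm_num

lemma sum_mI (e : Fin D) : ∑ a, ∑ b, mI μ e a b a b = 1 := by
  have inner : ∀ a : Fin D, (∫ U, ∑ b, itg e a b a b U ∂μ) = ∑ b, mI μ e a b a b :=
    fun a => integral_finset_sum _ (fun b _ => integrable_itg e a b a b)
  have outer : (∫ U, ∑ a, ∑ b, itg e a b a b U ∂μ)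
      = ∑ a, ∫ U, ∑ b, itg e a b a b U ∂μ :=
    integral_finset_sum _ (fun a _ => integrable_finset_sum _
      (fun b _ => integrable_itg e a b a b))
  have hone : (∫ U, ∑ a, ∑ b, itg e a b a b U ∂μ) = (1:ℂ) := by
    rw [integral_congr_ae (ae_of_all _ (sum_itg_one e))]
    simp
  rw [outer] at hone
  simp only [inner] at hone
  exact hone

lemma beta_val (hμ : ∀ V : UG D, Measure.map (fun U => V * U) μ = μ)
    (e : Fin D) {p q : Fin D} (hpq : p ≠ q) :
    mI μ e p q p q = ((D:ℂ) * ((D:ℂ) + 1))⁻¹ := by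
  have hone : (1:ℕ) ≤ D := p.pos
  have hsum := sum_mI (μ := μ) e
  have inner : ∀ a : Fin D, ∑ b, mI μ e a b a b
      = mI μ e p p p p + (D - 1 : ℕ) • mI μ e p q p q := by
    intro a
    rw [← Finset.add_sum_erase _ _ (Finset.mem_univ a)]
    congr 1
    · exact mI_diag_const hμ e a p
    · rw [Finset.sum_congr rfl
        (fun b hb => mI_off_const hμ e (Ne.symm (Finset.mem_erase.mp hb).1) hpq)]
      rw [Finset.sum_const, Finset.card_erase_of_mem (Finset.mem_univ a),
        Finset.card_univ, Fintype.card_fin]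
  rw [Finset.sum_congr rfl (fun a _ => inner a), Finset.sum_const,
    Finset.card_univ, Fintype.card_fin] at hsum
  rw [nsmul_eq_mul, nsmul_eq_mul, Nat.cast_sub hone, Nat.cast_one,
    alpha_two_beta hμ e hpq] at hsum
  have key : ((D:ℂ) * ((D:ℂ) + 1)) * mI μ e p q p q = 1 := by
    linear_combination hsum
  exact eq_inv_of_mul_eq_one_left (by linear_combination key)

lemma alpha_val (hμ : ∀ V : UG D, Measure.map (fun U => V * U) μ = μ)
    (e a : Fin D) :
    mI μ e a a a a = 2 * ((D:ℂ) * ((D:ℂ) + 1))⁻¹ := by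
  by_cases hq : ∃ q : Fin D, q ≠ a
  · obtain ⟨q, hq⟩ := hq
    rw [alpha_two_beta hμ e (Ne.symm hq), beta_val hμ e (Ne.symm hq)]
  · have hall : ∀ b : Fin D, b = a := fun b => not_not.mp (fun h => hq ⟨b, h⟩)
    have hD1 : D = 1 := by
      have h0 : 0 < D := a.pos
      by_contra hD
      have h2 : 2 ≤ D := by omega
      have e0 : (⟨0, by omega⟩ : Fin D) = a := hall _
      have e1 : (⟨1, by omega⟩ : Fin D) = a := hall _
      have : (⟨0, by omega⟩ : Fin D) = (⟨1, by omega⟩ : Fin D) := e0.trans e1.symm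
      simp [Fin.ext_iff] at this
    subst hD1
    have ha : a = 0 := Subsingleton.elim a 0
    subst ha
    have hsum := sum_mI (μ := μ) e
    simp only [Fin.sum_univ_one] at hsum
    rw [hsum]
    norm_num

lemma mI_swapcd (e a b : Fin D) : mI μ e a b b a = mI μ e a b a b := by
  unfold mI
  apply integral_congr_ae
  apply ae_of_all
  intro U
  unfold itg
  ring

end HaarSM

open HaarSM in
/-- for a Haar-random unit vector `φ = U e₀` in `ℂ^D`
(with `U` distributed according to the Haar probability measure on `U(D)`, i.e. the
left-invariant probability measure on the unitary group),
`E[|φ⟩⟨φ| ⊗ |φ⟩⟨φ|] = (I + F)/(D(D+1))` entrywise. -/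
theorem haar_second_moment_projector (D : ℕ) (hD : 0 < D)
    (μ : Measure (Matrix.unitaryGroup (Fin D) ℂ)) [IsProbabilityMeasure μ]
    (hμ : ∀ V : Matrix.unitaryGroup (Fin D) ℂ,
      Measure.map (fun U => V * U) μ = μ) :
    (Matrix.of fun x y =>
        ∫ U : Matrix.unitaryGroup (Fin D) ℂ,
          ((proj (fun i => (U : Matrix (Fin D) (Fin D) ℂ) i ⟨0, hD⟩)) ⊗ₖ
            (proj (fun i => (U : Matrix (Fin D) (Fin D) ℂ) i ⟨0, hD⟩))) x y ∂μ) =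
      (((D : ℂ) * ((D : ℂ) + 1)))⁻¹ • (1 + swapMat D) := by
  set e : Fin D := ⟨0, hD⟩
  ext ⟨a, b⟩ ⟨c, d⟩
  have hL : (∫ U : Matrix.unitaryGroup (Fin D) ℂ,
      ((proj (fun i => (U : Matrix (Fin D) (Fin D) ℂ) i e)) ⊗ₖ
        (proj (fun i => (U : Matrix (Fin D) (Fin D) ℂ) i e))) (a, b) (c, d) ∂μ)
      = mI μ e a b c d := by
    apply integral_congr_ae
    apply ae_of_all
    intro U
    simp only [proj, Matrix.kroneckerMap_apply, Matrix.of_apply]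
    rfl
  simp only [Matrix.of_apply]
  rw [hL]
  simp only [Matrix.smul_apply, Matrix.add_apply, Matrix.one_apply, swapMat, Matrix.of_apply,
    smul_eq_mul]
  by_cases h1 : a = c ∧ b = d
  · by_cases h2 : a = d ∧ b = c
    · obtain ⟨hac, hbd⟩ := h1
      obtain ⟨had, hbc⟩ := h2
      subst hac
      subst hbd
      subst had
      rw [if_pos rfl, if_pos ⟨rfl, rfl⟩, alpha_val hμ e a]
      ring
    · obtain ⟨hac, hbd⟩ := h1
      subst hac
      subst hbd
      have hab : a ≠ b := fun h => h2 ⟨h, h.symm⟩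
      rw [if_pos rfl, if_neg (fun hh : a = b ∧ b = a => hab hh.1),
        beta_val hμ e hab]
      ring
  · by_cases h2 : a = d ∧ b = c
    · obtain ⟨had, hbc⟩ := h2
      subst had
      subst hbc
      have hab : a ≠ b := fun h => h1 ⟨h.trans rfl, h.symm⟩
      rw [if_neg, if_pos ⟨rfl, rfl⟩, mI_swapcd e a b, beta_val hμ e hab]
      · ring
      · intro hh
        rw [Prod.mk.injEq] at hh
        exact h1 hh
    · rw [mI_zero hμ e a b c d h1 h2, if_neg, if_neg h2]
      · ring
      · intro hh
        rw [Prod.mk.injEq] at hh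
        exact h1 hh
end

section
/- Let φ = U·e₀ be a Haar-random unit vector in C^{D_v}⊗C^{D_h} (U Haar-distributed on the unitary group of dimension D_v·D_h). Then E[ Tr( (Tr_h |φ⟩⟨φ|)² ) ] = (D_v + D_h)/(D_v·D_h + 1). -/
open Matrix BigOperators MeasureTheory
open scoped Kronecker
set_option linter.unusedSectionVars false
set_option linter.unnecessarySeqFocus false
set_option maxHeartbeats 1000000

noncomputable def cc : ℂ := (↑(Real.sqrt 2))⁻¹

lemma cc_conj : (starRingEnd ℂ) cc = cc := by
  simp [cc, ← Complex.ofReal_inv]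

lemma cc_sq : cc * cc + cc * cc = 1 := by
  have h : (Real.sqrt 2) * (Real.sqrt 2) = 2 := Real.mul_self_sqrt (by norm_num)
  have h2 : (Real.sqrt 2 : ℂ) * (Real.sqrt 2 : ℂ) = 2 := by
    rw [← Complex.ofReal_mul, h]; norm_num
  have hne : (Real.sqrt 2 : ℂ) ≠ 0 := by
    intro h0
    rw [h0, mul_zero] at h2
    norm_num at h2
  have h3 : cc * cc = (2:ℂ)⁻¹ := by rw [cc, ← mul_inv, h2]
  rw [h3]
  norm_num



lemma cc_pow4 : cc * cc * (cc * cc) = (4:ℂ)⁻¹ := by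
  have h := cc_sq
  have : cc * cc = (2:ℂ)⁻¹ := by linear_combination h / 2
  rw [this]
  norm_num

section Aux
variable {ι : Type*} [Fintype ι] [DecidableEq ι]

noncomputable def colv (e0 : ι) (U : Matrix.unitaryGroup ι ℂ) (i : ι) : ℂ :=
  (U : Matrix ι ι ℂ) i e0

lemma measurable_colv (e0 i : ι) : Measurable (fun U => colv e0 U i) := by
  have : Measurable (fun U : Matrix.unitaryGroup ι ℂ => (U : Matrix ι ι ℂ)) :=
    measurable_subtype_coe
  exact ((measurable_pi_apply e0).comp (measurable_pi_apply i)).comp this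

lemma col_sum_sq (e0 : ι) (U : Matrix.unitaryGroup ι ℂ) :
    ∑ x, (starRingEnd ℂ) (colv e0 U x) * colv e0 U x = 1 := by
  have h1 : star (U : Matrix ι ι ℂ) * (U : Matrix ι ι ℂ) = 1 := U.2.1
  have := congrFun (congrFun h1 e0) e0
  simpa [Matrix.mul_apply, Matrix.one_apply, Matrix.star_apply, colv] using this

lemma col_norm_le (e0 : ι) (U : Matrix.unitaryGroup ι ℂ) (i : ι) : ‖colv e0 U i‖ ≤ 1 := by
  have h3 : ∑ x, (‖colv e0 U x‖ ^ 2 : ℝ) = 1 := by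
    have : ((∑ x, (‖colv e0 U x‖ ^ 2 : ℝ) : ℝ) : ℂ) = 1 := by
      push_cast
      rw [← col_sum_sq e0 U]
      refine Finset.sum_congr rfl fun x _ => ?_
      rw [Complex.conj_mul']
    exact_mod_cast this
  have h4 : ‖colv e0 U i‖ ^ 2 ≤ 1 := by
    rw [← h3]
    exact Finset.single_le_sum (f := fun x => (‖colv e0 U x‖ ^ 2 : ℝ))
      (fun x _ => sq_nonneg _) (Finset.mem_univ i)
  nlinarith [norm_nonneg (colv e0 U i)]

variable (μ : Measure (Matrix.unitaryGroup ι ℂ)) [IsProbabilityMeasure μ]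

noncomputable def mm (e0 i j k l : ι) : ℂ :=
  ∫ U, colv e0 U i * (starRingEnd ℂ) (colv e0 U j) *
      (colv e0 U k * (starRingEnd ℂ) (colv e0 U l)) ∂μ

lemma measurable_mono4 (e0 i j k l : ι) :
    Measurable (fun U : Matrix.unitaryGroup ι ℂ => colv e0 U i * (starRingEnd ℂ) (colv e0 U j) *
      (colv e0 U k * (starRingEnd ℂ) (colv e0 U l))) :=
  (((measurable_colv e0 i).mul (Complex.continuous_conj.measurable.comp (measurable_colv e0 j))).mul
    ((measurable_colv e0 k).mul (Complex.continuous_conj.measurable.comp (measurable_colv e0 l))))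

lemma integrable_mono4 (e0 i j k l : ι) :
    Integrable (fun U => colv e0 U i * (starRingEnd ℂ) (colv e0 U j) *
      (colv e0 U k * (starRingEnd ℂ) (colv e0 U l))) μ := by
  refine ⟨(measurable_mono4 e0 i j k l).aestronglyMeasurable, ?_⟩
  apply HasFiniteIntegral.of_bounded (C := 1)
  filter_upwards with U
  have hi := col_norm_le e0 U i
  have hj := col_norm_le e0 U j
  have hk := col_norm_le e0 U k
  have hl := col_norm_le e0 U l
  simp only [norm_mul, RCLike.norm_conj]
  have h1 : ‖colv e0 U i‖ * ‖colv e0 U j‖ ≤ 1 := mul_le_one₀ hi (norm_nonneg _) hj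
  have h2 : ‖colv e0 U k‖ * ‖colv e0 U l‖ ≤ 1 := mul_le_one₀ hk (norm_nonneg _) hl
  exact mul_le_one₀ h1 (by positivity) h2

lemma measurable_mulV (V : Matrix.unitaryGroup ι ℂ) :
    Measurable (fun U : Matrix.unitaryGroup ι ℂ => V * U) := by
  have h : Measurable (fun U : Matrix.unitaryGroup ι ℂ =>
      (V : Matrix ι ι ℂ) * (U : Matrix ι ι ℂ)) := by
    apply measurable_pi_lambda
    intro x
    apply measurable_pi_lambda
    intro y
    have : (fun U : Matrix.unitaryGroup ι ℂ => ((V : Matrix ι ι ℂ) * (U : Matrix ι ι ℂ)) x y)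
        = fun U : Matrix.unitaryGroup ι ℂ =>
          ∑ a, (V : Matrix ι ι ℂ) x a * (U : Matrix ι ι ℂ) a y := by
      funext U; rw [Matrix.mul_apply]
    rw [this]
    apply Finset.measurable_sum
    intro a _
    have hm0 : Measurable (fun U : Matrix.unitaryGroup ι ℂ => (U : Matrix ι ι ℂ)) :=
      measurable_subtype_coe
    exact (hm0.eval.eval).const_mul _
  exact Measurable.subtype_mk h

lemma colv_mul (e0 : ι) (V U : Matrix.unitaryGroup ι ℂ) (x : ι) :
    ((V * U : Matrix.unitaryGroup ι ℂ) : Matrix ι ι ℂ) x e0 =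
      ∑ a, (V : Matrix ι ι ℂ) x a * (U : Matrix ι ι ℂ) a e0 := by
  rw [Matrix.UnitaryGroup.mul_val, Matrix.mul_apply]

def diagU (d : ι → ℂ) (hd : ∀ t, (starRingEnd ℂ) (d t) * d t = 1) :
    Matrix.unitaryGroup ι ℂ :=
  ⟨Matrix.diagonal d, by
    rw [Matrix.mem_unitaryGroup_iff]
    show Matrix.diagonal d * (Matrix.diagonal d)ᴴ = 1
    rw [Matrix.diagonal_conjTranspose, Matrix.diagonal_mul_diagonal]
    ext x y
    by_cases h : x = y
    · subst h
      rw [Matrix.diagonal_apply_eq, Matrix.one_apply_eq]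
      simpa [mul_comm] using hd x
    · rw [Matrix.diagonal_apply_ne _ h, Matrix.one_apply_ne h]⟩

@[simp] lemma diagU_val (d : ι → ℂ) (hd) : (diagU d hd : Matrix ι ι ℂ) = Matrix.diagonal d := rfl

def permU (σ : Equiv.Perm ι) : Matrix.unitaryGroup ι ℂ :=
  ⟨Matrix.of fun x y => if y = σ x then 1 else 0, by
    rw [Matrix.mem_unitaryGroup_iff]
    ext x y
    simp only [Matrix.mul_apply, Matrix.star_apply, Matrix.of_apply, Matrix.one_apply,
      apply_ite (star : ℂ → ℂ), star_one, star_zero, ite_mul, one_mul, zero_mul]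
    rw [Finset.sum_ite_eq' Finset.univ (σ x) (fun a => if a = σ y then (1:ℂ) else 0)]
    simp [EmbeddingLike.apply_eq_iff_eq]⟩

@[simp] lemma permU_val (σ : Equiv.Perm ι) :
    (permU σ : Matrix ι ι ℂ) = Matrix.of fun x y => if y = σ x then 1 else 0 := rfl

noncomputable def hadM (i k : ι) : Matrix ι ι ℂ :=
  Matrix.of fun x y =>
    if x = i then (if y = i then cc else if y = k then cc else 0)
    else if x = k then (if y = i then cc else if y = k then -cc else 0)
    else if x = y then 1 else 0

lemma sum_split (i k : ι) (hik : i ≠ k) (f : ι → ℂ) :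
    ∑ a, f a = f i + f k + ∑ a ∈ Finset.univ \ ({i, k} : Finset ι), f a := by
  rw [← Finset.sum_sdiff (Finset.subset_univ ({i,k} : Finset ι)),
    Finset.sum_pair hik]
  ring

lemma hadM_unitary (i k : ι) (hik : i ≠ k) : hadM i k ∈ Matrix.unitaryGroup ι ℂ := by
  rw [Matrix.mem_unitaryGroup_iff]
  ext x y
  rw [Matrix.mul_apply]
  rw [sum_split i k hik]
  have htail : ∀ a ∈ Finset.univ \ ({i, k} : Finset ι),
      hadM i k x a * star (hadM i k) a y =
        (if x = a then 1 else 0) * (if y = a then 1 else 0) := by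
    intro a ha
    rw [Finset.mem_sdiff, Finset.mem_insert, Finset.mem_singleton] at ha
    push_neg at ha
    obtain ⟨-, hai, hak⟩ := ha
    rw [Matrix.star_apply]
    unfold hadM
    simp only [Matrix.of_apply, hai, hak, if_neg]
    by_cases hx : x = i <;> by_cases hx2 : x = k <;>
      by_cases hy : y = i <;> by_cases hy2 : y = k <;>
      simp_all [eq_comm]
  rw [Finset.sum_congr rfl htail]
  have htail2 : ∑ a ∈ Finset.univ \ ({i, k} : Finset ι),
      (if x = a then (1:ℂ) else 0) * (if y = a then 1 else 0) =
      if x ∈ Finset.univ \ ({i, k} : Finset ι) then (if y = x then 1 else 0) else 0 := by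
    rw [← Finset.sum_ite_eq (Finset.univ \ ({i, k} : Finset ι)) x
      (fun a => if y = a then (1:ℂ) else 0)]
    apply Finset.sum_congr rfl
    intro a _
    by_cases h1 : x = a <;> simp [h1]
  rw [htail2]
  have hcc := cc_sq
  unfold hadM
  simp only [Matrix.star_apply, Matrix.of_apply, Matrix.one_apply, Finset.mem_sdiff,
    Finset.mem_univ, Finset.mem_insert, Finset.mem_singleton, true_and]
  by_cases hx : x = i <;> by_cases hx2 : x = k <;>
    by_cases hy : y = i <;> by_cases hy2 : y = k <;>
    simp_all [hik, Ne.symm hik, map_neg, cc_conj, eq_comm]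
noncomputable def hadU (i k : ι) (hik : i ≠ k) : Matrix.unitaryGroup ι ℂ :=
  ⟨hadM i k, hadM_unitary i k hik⟩

lemma colv_hadU (e0 i k : ι) (hik : i ≠ k) (U : Matrix.unitaryGroup ι ℂ) :
    colv e0 (hadU i k hik * U) i = cc * colv e0 U i + cc * colv e0 U k := by
  show ((hadU i k hik * U : Matrix.unitaryGroup ι ℂ) : Matrix ι ι ℂ) i e0 = _
  rw [Matrix.UnitaryGroup.mul_val, Matrix.mul_apply]
  have h : ∀ a : ι, (hadU i k hik : Matrix ι ι ℂ) i a * (U : Matrix ι ι ℂ) a e0 =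
      (if i = a then cc * (U : Matrix ι ι ℂ) a e0 else 0) +
      (if k = a then cc * (U : Matrix ι ι ℂ) a e0 else 0) := by
    intro a
    show hadM i k i a * _ = _
    unfold hadM
    simp only [Matrix.of_apply, if_pos rfl]
    by_cases h1 : a = i
    · subst h1; simp [hik, Ne.symm hik]
    · by_cases h2 : a = k
      · subst h2; simp [Ne.symm hik, hik]
      · simp [h1, h2, Ne.symm h1, Ne.symm h2]
  rw [Finset.sum_congr rfl (fun a _ => h a), Finset.sum_add_distrib,
    Finset.sum_ite_eq Finset.univ i, Finset.sum_ite_eq Finset.univ k]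
  simp [colv]

section Inv
variable (μ : Measure (Matrix.unitaryGroup ι ℂ)) [IsProbabilityMeasure μ]
variable (hμ : ∀ V : Matrix.unitaryGroup ι ℂ, Measure.map (fun U => V * U) μ = μ)
include hμ

omit [IsProbabilityMeasure μ] in
lemma integral_comp_mul (V : Matrix.unitaryGroup ι ℂ) {F : Matrix.unitaryGroup ι ℂ → ℂ}
    (hF : Measurable F) : ∫ U, F (V * U) ∂μ = ∫ U, F U ∂μ := by
  conv_rhs => rw [← hμ V]
  rw [integral_map (measurable_mulV V).aemeasurable hF.aestronglyMeasurable]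

omit hμ in
lemma colv_diagU (e0 : ι) (d : ι → ℂ) (hd) (U : Matrix.unitaryGroup ι ℂ) (x : ι) :
    colv e0 (diagU d hd * U) x = d x * colv e0 U x := by
  show ((diagU d hd * U : Matrix.unitaryGroup ι ℂ) : Matrix ι ι ℂ) x e0 = _
  rw [Matrix.UnitaryGroup.mul_val, diagU_val, Matrix.diagonal_mul]
  rfl

lemma mm_phase (e0 i j k l : ι) (d : ι → ℂ) (hd : ∀ t, (starRingEnd ℂ) (d t) * d t = 1) :
    mm μ e0 i j k l =
      d i * (starRingEnd ℂ) (d j) * (d k * (starRingEnd ℂ) (d l)) * mm μ e0 i j k l := by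
  have h := integral_comp_mul μ hμ (diagU d hd) (measurable_mono4 e0 i j k l)
  have h2 : ∀ U : Matrix.unitaryGroup ι ℂ,
      colv e0 (diagU d hd * U) i * (starRingEnd ℂ) (colv e0 (diagU d hd * U) j) *
        (colv e0 (diagU d hd * U) k * (starRingEnd ℂ) (colv e0 (diagU d hd * U) l)) =
      d i * (starRingEnd ℂ) (d j) * (d k * (starRingEnd ℂ) (d l)) *
        (colv e0 U i * (starRingEnd ℂ) (colv e0 U j) *
          (colv e0 U k * (starRingEnd ℂ) (colv e0 U l))) := by
    intro U
    simp only [colv_diagU, _root_.map_mul]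
    ring
  calc mm μ e0 i j k l = ∫ U, colv e0 (diagU d hd * U) i *
        (starRingEnd ℂ) (colv e0 (diagU d hd * U) j) *
        (colv e0 (diagU d hd * U) k * (starRingEnd ℂ) (colv e0 (diagU d hd * U) l)) ∂μ := by
        rw [h]; rfl
    _ = ∫ U, d i * (starRingEnd ℂ) (d j) * (d k * (starRingEnd ℂ) (d l)) *
        (colv e0 U i * (starRingEnd ℂ) (colv e0 U j) *
          (colv e0 U k * (starRingEnd ℂ) (colv e0 U l))) ∂μ := by
        exact integral_congr_ae (Filter.Eventually.of_forall h2)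
    _ = _ := integral_const_mul _ _

omit hμ in
/-- the `I`-at-`t0` phase function -/
noncomputable def dI (t0 : ι) : ι → ℂ := fun t => if t = t0 then Complex.I else 1

omit hμ [Fintype ι] in
lemma dI_unimodular (t0 : ι) : ∀ t, (starRingEnd ℂ) (dI t0 t) * dI t0 t = 1 := by
  intro t
  unfold dI
  by_cases h : t = t0 <;> simp [h]

lemma mm_eq_zero_of (e0 i j k l t0 : ι)
    (h : dI t0 i * (starRingEnd ℂ) (dI t0 j) * (dI t0 k * (starRingEnd ℂ) (dI t0 l)) ≠ 1) :
    mm μ e0 i j k l = 0 := by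
  have := mm_phase μ hμ e0 i j k l (dI t0) (dI_unimodular t0)
  have h2 : (1 - dI t0 i * (starRingEnd ℂ) (dI t0 j) * (dI t0 k * (starRingEnd ℂ) (dI t0 l))) *
      mm μ e0 i j k l = 0 := by
    rw [sub_mul, one_mul]
    nth_rewrite 1 [this]
    ring
  rcases mul_eq_zero.mp h2 with h3 | h3
  · exact absurd (by linear_combination -h3) h
  · exact h3

omit hμ in
lemma colv_permU (e0 : ι) (σ : Equiv.Perm ι) (U : Matrix.unitaryGroup ι ℂ) (x : ι) :
    colv e0 (permU σ * U) x = colv e0 U (σ x) := by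
  show ((permU σ * U : Matrix.unitaryGroup ι ℂ) : Matrix ι ι ℂ) x e0 = _
  rw [Matrix.UnitaryGroup.mul_val, Matrix.mul_apply]
  simp only [permU_val, Matrix.of_apply, ite_mul, one_mul, zero_mul]
  rw [Finset.sum_ite_eq' Finset.univ (σ x) (fun a => (U : Matrix ι ι ℂ) a e0)]
  simp [colv]

lemma mm_perm (e0 i j k l : ι) (σ : Equiv.Perm ι) :
    mm μ e0 i j k l = mm μ e0 (σ i) (σ j) (σ k) (σ l) := by
  have h := integral_comp_mul μ hμ (permU σ) (measurable_mono4 e0 i j k l)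
  calc mm μ e0 i j k l = ∫ U, colv e0 (permU σ * U) i *
        (starRingEnd ℂ) (colv e0 (permU σ * U) j) *
        (colv e0 (permU σ * U) k * (starRingEnd ℂ) (colv e0 (permU σ * U) l)) ∂μ := by
        rw [h]; rfl
    _ = _ := by
        unfold mm
        exact integral_congr_ae (Filter.Eventually.of_forall fun U => by
          simp only [colv_permU])

omit hμ in
lemma mm_comm1 (e0 x y : ι) : mm μ e0 x y y x = mm μ e0 x x y y := by
  unfold mm
  exact integral_congr_ae (Filter.Eventually.of_forall fun U => by ring)

omit hμ in
lemma mm_comm3 (e0 x y : ι) : mm μ e0 y y x x = mm μ e0 x x y y := by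
  unfold mm
  exact integral_congr_ae (Filter.Eventually.of_forall fun U => by ring)

lemma mm_bb (e0 i k i' k' : ι) (hik : i ≠ k) (h' : i' ≠ k') :
    mm μ e0 i i k k = mm μ e0 i' i' k' k' := by
  set τ := Equiv.swap i i' with hτ
  set σ := τ.trans (Equiv.swap (τ k) k') with hσ
  have hτi : τ i = i' := Equiv.swap_apply_left i i'
  have hτk : τ k ≠ i' := fun h => hik (τ.injective (h.trans hτi.symm)).symm
  have hσi : σ i = i' := by
    rw [hσ, Equiv.trans_apply, hτi, Equiv.swap_apply_of_ne_of_ne (Ne.symm hτk) h']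
  have hσk : σ k = k' := by
    rw [hσ, Equiv.trans_apply, Equiv.swap_apply_left]
  have := mm_perm μ hμ e0 i i k k σ
  rwa [hσi, hσk] at this

lemma mm_aa' (e0 i i' : ι) : mm μ e0 i i i i = mm μ e0 i' i' i' i' := by
  have := mm_perm μ hμ e0 i i i i (Equiv.swap i i')
  rwa [Equiv.swap_apply_left] at this

lemma sum_mm_eq_one (e0 : ι) : ∑ x, ∑ y, mm μ e0 x x y y = 1 := by
  have h1 : ∀ U : Matrix.unitaryGroup ι ℂ, ∑ x, ∑ y,
      (colv e0 U x * (starRingEnd ℂ) (colv e0 U x) *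
        (colv e0 U y * (starRingEnd ℂ) (colv e0 U y))) = 1 := by
    intro U
    rw [← Finset.sum_mul_sum]
    have h2 : ∑ x, colv e0 U x * (starRingEnd ℂ) (colv e0 U x) = 1 := by
      rw [← col_sum_sq e0 U]
      exact Finset.sum_congr rfl fun x _ => mul_comm _ _
    rw [h2, one_mul]
  have h3 : ∑ x, ∑ y, mm μ e0 x x y y =
      ∫ U, ∑ x, ∑ y, (colv e0 U x * (starRingEnd ℂ) (colv e0 U x) *
        (colv e0 U y * (starRingEnd ℂ) (colv e0 U y))) ∂μ := by
    rw [integral_finset_sum _ (fun x _ => integrable_finset_sum _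
      (fun y _ => integrable_mono4 μ e0 x x y y))]
    exact Finset.sum_congr rfl fun x _ => by
      rw [integral_finset_sum _ (fun y _ => integrable_mono4 μ e0 x x y y)]
      rfl
  rw [h3, integral_congr_ae (Filter.Eventually.of_forall h1)]
  simp

lemma had_rel (e0 i k : ι) (hik : i ≠ k) :
    mm μ e0 i i i i = 2 * mm μ e0 i i k k := by
  classical
  set V := hadU i k hik with hV
  set g : Fin 2 → ι := ![i, k] with hg
  have hcol : ∀ U : Matrix.unitaryGroup ι ℂ,
      colv e0 (V * U) i = cc * colv e0 U i + cc * colv e0 U k :=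
    fun U => colv_hadU e0 i k hik U
  have hinv := integral_comp_mul μ hμ V (measurable_mono4 e0 i i i i)
  have hexp : ∀ U : Matrix.unitaryGroup ι ℂ,
      colv e0 (V * U) i * (starRingEnd ℂ) (colv e0 (V * U) i) *
        (colv e0 (V * U) i * (starRingEnd ℂ) (colv e0 (V * U) i)) =
      ∑ s : (Fin 2 × Fin 2) × Fin 2 × Fin 2, (cc * cc * (cc * cc)) *
        (colv e0 U (g s.1.1) * (starRingEnd ℂ) (colv e0 U (g s.1.2)) *
          (colv e0 U (g s.2.1) * (starRingEnd ℂ) (colv e0 U (g s.2.2)))) := by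
    intro U
    rw [hcol U]
    rw [Fintype.sum_prod_type]
    simp only [Fintype.sum_prod_type, Fin.sum_univ_two]
    simp only [hg, Matrix.cons_val_zero, Matrix.cons_val_one, Matrix.head_cons,
      _root_.map_add, _root_.map_mul, cc_conj]
    ring
  have hint : ∫ U, colv e0 (V * U) i * (starRingEnd ℂ) (colv e0 (V * U) i) *
        (colv e0 (V * U) i * (starRingEnd ℂ) (colv e0 (V * U) i)) ∂μ =
      ∑ s : (Fin 2 × Fin 2) × Fin 2 × Fin 2, (cc * cc * (cc * cc)) *
        mm μ e0 (g s.1.1) (g s.1.2) (g s.2.1) (g s.2.2) := by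
    rw [integral_congr_ae (Filter.Eventually.of_forall hexp),
      integral_finset_sum _ (fun s _ => (integrable_mono4 μ e0 (g s.1.1) (g s.1.2)
        (g s.2.1) (g s.2.2)).const_mul _)]
    exact Finset.sum_congr rfl fun s _ => integral_const_mul _ _
  have hmain : mm μ e0 i i i i = ∑ s : (Fin 2 × Fin 2) × Fin 2 × Fin 2,
      (cc * cc * (cc * cc)) *
        mm μ e0 (g s.1.1) (g s.1.2) (g s.2.1) (g s.2.2) := by
    rw [← hint]
    rw [hinv]
    rfl
  -- now evaluate the 16 terms
  have hzero : ∀ j l x y : ι, j ≠ k → l = k → x ≠ k → y ≠ k → True := fun _ _ _ _ _ _ _ _ => trivial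
  -- zero lemmas
  have z1 : mm μ e0 i i i k = 0 := by
    apply mm_eq_zero_of μ hμ e0 i i i k k
    simp [dI, hik, Complex.ext_iff]
  have z2 : mm μ e0 i i k i = 0 := by
    apply mm_eq_zero_of μ hμ e0 i i k i k
    simp [dI, hik, Complex.ext_iff]
  have z3 : mm μ e0 i k i i = 0 := by
    apply mm_eq_zero_of μ hμ e0 i k i i k
    simp [dI, hik, Complex.ext_iff]
  have z4 : mm μ e0 k i i i = 0 := by
    apply mm_eq_zero_of μ hμ e0 k i i i k
    simp [dI, hik, Complex.ext_iff]
  have z5 : mm μ e0 i k k k = 0 := by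
    apply mm_eq_zero_of μ hμ e0 i k k k k
    simp [dI, hik, Complex.ext_iff]
  have z6 : mm μ e0 k i k k = 0 := by
    apply mm_eq_zero_of μ hμ e0 k i k k k
    simp [dI, hik, Complex.ext_iff]
  have z7 : mm μ e0 k k i k = 0 := by
    apply mm_eq_zero_of μ hμ e0 k k i k k
    simp [dI, hik, Complex.ext_iff]
  have z8 : mm μ e0 k k k i = 0 := by
    apply mm_eq_zero_of μ hμ e0 k k k i k
    simp [dI, hik, Complex.ext_iff]
  have z9 : mm μ e0 i k i k = 0 := by
    apply mm_eq_zero_of μ hμ e0 i k i k k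
    simp [dI, hik, Complex.ext_iff]
    norm_num
  have z10 : mm μ e0 k i k i = 0 := by
    apply mm_eq_zero_of μ hμ e0 k i k i k
    simp [dI, hik, Complex.ext_iff]
    norm_num
  have e1 : mm μ e0 i k k i = mm μ e0 i i k k := mm_comm1 μ e0 i k
  have e2 : mm μ e0 k i i k = mm μ e0 k k i i := mm_comm1 μ e0 k i
  have e3 : mm μ e0 k k i i = mm μ e0 i i k k := mm_comm3 μ e0 i k
  have e4 : mm μ e0 k k k k = mm μ e0 i i i i := mm_aa' μ hμ e0 k i
  rw [Fintype.sum_prod_type] at hmain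
  simp only [Fintype.sum_prod_type, Fin.sum_univ_two] at hmain
  simp only [hg, Matrix.cons_val_zero, Matrix.cons_val_one, Matrix.head_cons] at hmain
  rw [z1, z2, z3, z4, z5, z6, z7, z8, z9, z10, e1, e2, e3, e4] at hmain
  rw [cc_pow4] at hmain
  linear_combination 2 * hmain

lemma mm_xxyy (e0 i0 k0 : ι) (hik : i0 ≠ k0) (x y : ι) :
    mm μ e0 x x y y = (if x = y then 2 else 1) * mm μ e0 i0 i0 k0 k0 := by
  by_cases h : x = y
  · subst h
    rw [if_pos rfl, mm_aa' μ hμ e0 x i0, had_rel μ hμ e0 i0 k0 hik]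
  · rw [if_neg h, one_mul]
    exact mm_bb μ hμ e0 x y i0 k0 h hik

lemma mm_norm (e0 i0 k0 : ι) (hik : i0 ≠ k0) :
    ((Fintype.card ι : ℂ) * (Fintype.card ι : ℂ) + (Fintype.card ι : ℂ)) *
      mm μ e0 i0 i0 k0 k0 = 1 := by
  have h := sum_mm_eq_one μ hμ e0
  have h2 : ∑ x : ι, ∑ y : ι, mm μ e0 x x y y =
      ((Fintype.card ι : ℂ) * (Fintype.card ι : ℂ) + (Fintype.card ι : ℂ)) *
        mm μ e0 i0 i0 k0 k0 := by
    rw [Finset.sum_congr rfl (fun x _ => Finset.sum_congr rfl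
      (fun y _ => mm_xxyy μ hμ e0 i0 k0 hik x y))]
    simp only [← Finset.sum_mul]
    congr 1
    have hrow : ∀ x : ι, ∑ y : ι, (if x = y then (2:ℂ) else 1) =
        1 + (Fintype.card ι : ℂ) := by
      intro x
      have : (fun y => if x = y then (2:ℂ) else 1) =
          fun y => (if x = y then (1:ℂ) else 0) + 1 := by
        funext y
        by_cases h : x = y <;> simp [h] <;> norm_num
      rw [this, Finset.sum_add_distrib, Finset.sum_ite_eq, Finset.sum_const]
      simp [Finset.card_univ]
    rw [Finset.sum_congr rfl fun x _ => hrow x, Finset.sum_const]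
    simp [Finset.card_univ]
    ring
  rw [← h2, h]

end Inv
end Aux
/-- Lubkin's formula: for a Haar-random unit vector
`φ = U e₀` in `ℂ^{Dv} ⊗ ℂ^{Dh}` (with `U` distributed according to the Haar, i.e.
left-invariant, probability measure on the unitary group),
`E[Tr((Tr_h |φ⟩⟨φ|)²)] = (Dv + Dh)/(Dv Dh + 1)`. -/
theorem haar_average_purity (Dv Dh : ℕ) (hv : 0 < Dv) (hh : 0 < Dh)
    (μ : Measure (Matrix.unitaryGroup (Fin Dv × Fin Dh) ℂ)) [IsProbabilityMeasure μ]
    (hμ : ∀ V : Matrix.unitaryGroup (Fin Dv × Fin Dh) ℂ,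
      Measure.map (fun U => V * U) μ = μ) :
    ∫ U : Matrix.unitaryGroup (Fin Dv × Fin Dh) ℂ,
        ((trH (proj (fun i =>
            (U : Matrix (Fin Dv × Fin Dh) (Fin Dv × Fin Dh) ℂ) i (⟨0, hv⟩, ⟨0, hh⟩)))) *
          (trH (proj (fun i =>
            (U : Matrix (Fin Dv × Fin Dh) (Fin Dv × Fin Dh) ℂ) i (⟨0, hv⟩, ⟨0, hh⟩))))).trace ∂μ =
      ((Dv : ℂ) + (Dh : ℂ)) / ((Dv : ℂ) * (Dh : ℂ) + 1) := by
  classical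
  set e0 : Fin Dv × Fin Dh := (⟨0, hv⟩, ⟨0, hh⟩) with he0
  have hpt : ∀ U : Matrix.unitaryGroup (Fin Dv × Fin Dh) ℂ,
      ((trH (proj (fun i =>
          (U : Matrix (Fin Dv × Fin Dh) (Fin Dv × Fin Dh) ℂ) i e0))) *
        (trH (proj (fun i =>
          (U : Matrix (Fin Dv × Fin Dh) (Fin Dv × Fin Dh) ℂ) i e0)))).trace =
      ∑ s : (Fin Dv × Fin Dv) × Fin Dh × Fin Dh,
        (colv e0 U (s.1.1, s.2.1) * (starRingEnd ℂ) (colv e0 U (s.1.2, s.2.1)) *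
          (colv e0 U (s.1.2, s.2.2) * (starRingEnd ℂ) (colv e0 U (s.1.1, s.2.2)))) := by
    intro U
    unfold Matrix.trace
    simp only [Fintype.sum_prod_type]
    refine Finset.sum_congr rfl fun p _ => ?_
    rw [Matrix.diag_apply, Matrix.mul_apply]
    refine Finset.sum_congr rfl fun v _ => ?_
    unfold trH proj colv
    simp only [Matrix.of_apply]
    rw [Finset.sum_mul_sum]
    simp only [Complex.star_def]
  have hint : ∫ U : Matrix.unitaryGroup (Fin Dv × Fin Dh) ℂ,
      ((trH (proj (fun i =>
          (U : Matrix (Fin Dv × Fin Dh) (Fin Dv × Fin Dh) ℂ) i e0))) *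
        (trH (proj (fun i =>
          (U : Matrix (Fin Dv × Fin Dh) (Fin Dv × Fin Dh) ℂ) i e0)))).trace ∂μ =
      ∑ s : (Fin Dv × Fin Dv) × Fin Dh × Fin Dh,
        mm μ e0 (s.1.1, s.2.1) (s.1.2, s.2.1) (s.1.2, s.2.2) (s.1.1, s.2.2) := by
    rw [integral_congr_ae (Filter.Eventually.of_forall hpt),
      integral_finset_sum _ (fun s _ => integrable_mono4 μ e0 (s.1.1, s.2.1)
        (s.1.2, s.2.1) (s.1.2, s.2.2) (s.1.1, s.2.2))]
    rfl
  by_cases hD : Dv = 1 ∧ Dh = 1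
  · -- trivial one-dimensional case
    obtain ⟨rfl, rfl⟩ := hD
    rw [hint]
    rw [Fintype.sum_subsingleton _ (((e0.1, e0.1), (e0.2, e0.2)) :
      (Fin 1 × Fin 1) × Fin 1 × Fin 1)]
    have h1 : mm μ e0 (e0.1, e0.2) (e0.1, e0.2) (e0.1, e0.2) (e0.1, e0.2) = 1 := by
      have heq : ∀ U : Matrix.unitaryGroup (Fin 1 × Fin 1) ℂ,
          colv e0 U (e0.1, e0.2) * (starRingEnd ℂ) (colv e0 U (e0.1, e0.2)) *
            (colv e0 U (e0.1, e0.2) * (starRingEnd ℂ) (colv e0 U (e0.1, e0.2))) = 1 := by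
        intro U
        have hs := col_sum_sq e0 U
        rw [Fintype.sum_subsingleton _ (e0.1, e0.2)] at hs
        linear_combination ((starRingEnd ℂ) (colv e0 U (e0.1, e0.2)) *
          colv e0 U (e0.1, e0.2) + 1) * hs
      unfold mm
      rw [integral_congr_ae (Filter.Eventually.of_forall heq)]
      simp
    rw [h1]
    norm_num
  · -- main case : at least two indices
    have h2D : 2 ≤ Dv * Dh := by
      by_cases h1 : Dv = 1
      · have hDh2 : 2 ≤ Dh := by
          have : Dh ≠ 1 := fun h => hD ⟨h1, h⟩
          omega
        subst h1
        simpa using hDh2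
      · have h2 : 2 ≤ Dv := by omega
        calc 2 ≤ Dv := h2
          _ = Dv * 1 := (mul_one Dv).symm
          _ ≤ Dv * Dh := Nat.mul_le_mul_left Dv hh
    have hcard : 1 < Fintype.card (Fin Dv × Fin Dh) := by
      rw [Fintype.card_prod, Fintype.card_fin, Fintype.card_fin]
      omega
    obtain ⟨i0, k0, hik⟩ := Fintype.exists_pair_of_one_lt_card hcard
    have hterm : ∀ (p v : Fin Dv) (q q' : Fin Dh),
        mm μ e0 (p, q) (v, q) (v, q') (p, q') =
          ((if p = v then 1 else 0) + (if q = q' then 1 else 0)) *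
            mm μ e0 i0 i0 k0 k0 := by
      intro p v q q'
      by_cases hpv : p = v
      · subst hpv
        by_cases hqq : q = q'
        · subst hqq
          rw [mm_xxyy μ hμ e0 i0 k0 hik (p, q) (p, q), if_pos rfl, if_pos rfl, if_pos rfl]
          norm_num
        · have hne : (p, q) ≠ (p, q') := fun h => hqq (Prod.ext_iff.mp h).2
          rw [mm_xxyy μ hμ e0 i0 k0 hik (p, q) (p, q'), if_neg hne, if_pos rfl, if_neg hqq]
          norm_num
      · by_cases hqq : q = q'
        · subst hqq
          have hne : (p, q) ≠ (v, q) := fun h => hpv (Prod.ext_iff.mp h).1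
          rw [mm_comm1 μ e0 (p, q) (v, q), mm_xxyy μ hμ e0 i0 k0 hik (p, q) (v, q),
            if_neg hne, if_neg hpv, if_pos rfl]
          norm_num
        · rw [if_neg hpv, if_neg hqq]
          rw [mm_eq_zero_of μ hμ e0 (p, q) (v, q) (v, q') (p, q') (p, q)]
          · ring
          · have h1 : ((v, q) : Fin Dv × Fin Dh) ≠ (p, q) :=
              fun h => hpv ((Prod.ext_iff.mp h).1).symm
            have h2 : ((v, q') : Fin Dv × Fin Dh) ≠ (p, q) :=
              fun h => hpv ((Prod.ext_iff.mp h).1).symm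
            have h3 : ((p, q') : Fin Dv × Fin Dh) ≠ (p, q) :=
              fun h => hqq ((Prod.ext_iff.mp h).2).symm
            simp [dI, h1, h2, h3, Complex.ext_iff]
    have c1 : ∑ s : (Fin Dv × Fin Dv) × Fin Dh × Fin Dh,
        (if s.1.1 = s.1.2 then (1:ℂ) else 0) = (Dv : ℂ) * Dh * Dh := by
      rw [Fintype.sum_prod_type]
      have inner : ∀ a : Fin Dv × Fin Dv, ∑ _b : Fin Dh × Fin Dh,
          (if a.1 = a.2 then (1:ℂ) else 0) =
          (if a.1 = a.2 then (1:ℂ) else 0) * ((Dh : ℂ) * Dh) := by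
        intro a
        rw [Finset.sum_const, Finset.card_univ, Fintype.card_prod, Fintype.card_fin,
          nsmul_eq_mul]
        push_cast
        ring
      rw [Finset.sum_congr rfl (fun a _ => inner a), ← Finset.sum_mul]
      have hcnt : ∑ a : Fin Dv × Fin Dv, (if a.1 = a.2 then (1:ℂ) else 0) = (Dv : ℂ) := by
        rw [Fintype.sum_prod_type]
        simp [Finset.sum_ite_eq, Finset.card_univ]
      rw [hcnt]
      ring
    have c2 : ∑ s : (Fin Dv × Fin Dv) × Fin Dh × Fin Dh,
        (if s.2.1 = s.2.2 then (1:ℂ) else 0) = (Dv : ℂ) * Dv * Dh := by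
      rw [Fintype.sum_prod_type]
      have inner : ∀ a : Fin Dv × Fin Dv, ∑ b : Fin Dh × Fin Dh,
          (if b.1 = b.2 then (1:ℂ) else 0) = (Dh : ℂ) := by
        intro a
        rw [Fintype.sum_prod_type]
        simp [Finset.sum_ite_eq, Finset.card_univ]
      rw [Finset.sum_congr rfl (fun a _ => inner a), Finset.sum_const, Finset.card_univ,
        Fintype.card_prod, Fintype.card_fin, nsmul_eq_mul]
      push_cast
      ring
    have hsum : ∑ s : (Fin Dv × Fin Dv) × Fin Dh × Fin Dh,
        mm μ e0 (s.1.1, s.2.1) (s.1.2, s.2.1) (s.1.2, s.2.2) (s.1.1, s.2.2) =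
        ((Dv : ℂ) * Dh * Dh + (Dv : ℂ) * Dv * Dh) * mm μ e0 i0 i0 k0 k0 := by
      rw [Finset.sum_congr rfl (fun s _ => hterm s.1.1 s.1.2 s.2.1 s.2.2),
        ← Finset.sum_mul, Finset.sum_add_distrib, c1, c2]
    have hnorm := mm_norm μ hμ e0 i0 k0 hik
    rw [Fintype.card_prod, Fintype.card_fin, Fintype.card_fin] at hnorm
    push_cast at hnorm
    rw [hint, hsum]
    have hD1 : (Dv : ℂ) * Dh + 1 ≠ 0 := by
      have : ((Dv * Dh + 1 : ℕ) : ℂ) ≠ 0 := Nat.cast_ne_zero.mpr (by positivity)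
      push_cast at this
      exact this
    rw [eq_div_iff hD1]
    linear_combination ((Dv : ℂ) + Dh) * hnorm
end

section
/- Let K be a Hermitian matrix indexed by (Fin D_v × Fin D_h), set D = D_v·D_h, let φ = U·e₀ be a Haar-random unit vector in C^{D_v}⊗C^{D_h}, and let p₁, p₂, q₁, q₂ be natural numbers. Then E[ Tr( (Tr_h(K^{p₁}·|φ⟩⟨φ|·K^{p₂})) · (Tr_h(K^{q₁}·|φ⟩⟨φ|·K^{q₂})) ) ] = (1/(D·(D+1))) · [ Tr( (Tr_h K^{p₁+p₂})·(Tr_h K^{q₁+q₂}) ) + Tr( (Tr_v K^{q₁+p₂})·(Tr_v K^{p₁+q₂}) ) ]. -/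
open Matrix BigOperators MeasureTheory
open scoped Kronecker
open scoped ComplexConjugate

/-- Partial trace over the visible (first) tensor factor. -/
noncomputable def trV {Dv Dh : ℕ} (M : Matrix (Fin Dv × Fin Dh) (Fin Dv × Fin Dh) ℂ) :
    Matrix (Fin Dh) (Fin Dh) ℂ :=
  Matrix.of fun q s => ∑ p, M (p, q) (p, s)

set_option linter.unusedSectionVars false
set_option maxHeartbeats 1000000


namespace HaarAux

variable {n : Type*} [Fintype n] [DecidableEq n]

noncomputable def phi (e0 : n) (U : Matrix.unitaryGroup n ℂ) (i : n) : ℂ :=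
  (U : Matrix n n ℂ) i e0

noncomputable def m4 (e0 i j k l : n) (U : Matrix.unitaryGroup n ℂ) : ℂ :=
  phi e0 U i * conj (phi e0 U j) * phi e0 U k * conj (phi e0 U l)

lemma measurable_conj' : Measurable (fun z : ℂ => conj z) :=
  Complex.conjCLE.continuous.measurable

lemma measurable_phi (e0 i : n) : Measurable (fun U => phi e0 U i) :=
  (measurable_pi_apply e0).comp ((measurable_pi_apply i).comp measurable_subtype_coe)

lemma measurable_m4 (e0 i j k l : n) : Measurable (m4 e0 i j k l) := by
  exact (((measurable_phi e0 i).mul (measurable_conj'.comp (measurable_phi e0 j))).mul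
    (measurable_phi e0 k)).mul (measurable_conj'.comp (measurable_phi e0 l))

lemma sum_conj_mul_phi (e0 : n) (U : Matrix.unitaryGroup n ℂ) :
    ∑ i, conj (phi e0 U i) * phi e0 U i = 1 := by
  have h : (star (U : Matrix n n ℂ) * (U : Matrix n n ℂ)) e0 e0 = (1 : Matrix n n ℂ) e0 e0 := by
    rw [Matrix.UnitaryGroup.star_mul_self]
  simpa [Matrix.mul_apply, Matrix.one_apply, phi, Matrix.conjTranspose_apply] using h

lemma norm_phi_le_one (e0 : n) (U : Matrix.unitaryGroup n ℂ) (i : n) : ‖phi e0 U i‖ ≤ 1 := by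
  have h := sum_conj_mul_phi e0 U
  have h2 : ∑ x, (Complex.normSq (phi e0 U x) : ℝ) = 1 := by
    have := congrArg Complex.re h
    simpa [Complex.normSq, Complex.mul_re, Complex.conj_re, Complex.conj_im, mul_comm,
      Complex.re_sum] using this
  have h3 : Complex.normSq (phi e0 U i) ≤ 1 := by
    rw [← h2]
    exact Finset.single_le_sum (f := fun x => Complex.normSq (phi e0 U x))
      (fun x _ => Complex.normSq_nonneg _) (Finset.mem_univ i)
  have h4 : ‖phi e0 U i‖ ^ 2 ≤ 1 := by
    rw [Complex.sq_norm]; exact h3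
  nlinarith [norm_nonneg (phi e0 U i)]

lemma norm_m4_le_one (e0 i j k l : n) (U : Matrix.unitaryGroup n ℂ) : ‖m4 e0 i j k l U‖ ≤ 1 := by
  unfold m4
  have g : ∀ x : n, ‖conj (phi e0 U x)‖ ≤ 1 := fun x => by
    rw [RCLike.norm_conj]; exact norm_phi_le_one e0 U x
  rw [norm_mul, norm_mul, norm_mul]
  exact mul_le_one₀
    (mul_le_one₀ (mul_le_one₀ (norm_phi_le_one e0 U i) (norm_nonneg _) (g j))
      (norm_nonneg _) (norm_phi_le_one e0 U k))
    (norm_nonneg _) (g l)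

variable (μ : Measure (Matrix.unitaryGroup n ℂ)) [IsProbabilityMeasure μ]

lemma integrable_m4 (e0 i j k l : n) : Integrable (m4 e0 i j k l) μ := by
  refine Integrable.mono' (integrable_const 1) (measurable_m4 e0 i j k l).aestronglyMeasurable ?_
  exact Filter.Eventually.of_forall (norm_m4_le_one e0 i j k l)



lemma measurable_mulLeft (V : Matrix.unitaryGroup n ℂ) :
    Measurable (fun U : Matrix.unitaryGroup n ℂ => V * U) := by
  have hm : Measurable (fun U : Matrix.unitaryGroup n ℂ =>
      ((V : Matrix n n ℂ) * (U : Matrix n n ℂ))) := by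
    apply measurable_pi_lambda
    intro i
    apply measurable_pi_lambda
    intro j
    simp only [Matrix.mul_apply]
    apply Finset.measurable_sum
    intro k _
    exact Measurable.const_mul ((measurable_pi_apply j).comp
      ((measurable_pi_apply k).comp (measurable_subtype_coe
        (p := fun A : Matrix n n ℂ => A ∈ Matrix.unitaryGroup n ℂ)))) _
  have heq : (fun U : Matrix.unitaryGroup n ℂ => V * U) =
      fun U : Matrix.unitaryGroup n ℂ =>
        (⟨(V : Matrix n n ℂ) * (U : Matrix n n ℂ),
          mul_mem V.2 U.2⟩ : Matrix.unitaryGroup n ℂ) := by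
    funext U
    apply Subtype.ext
    simp
  rw [heq]
  exact hm.subtype_mk


lemma integral_mulLeft_inv (hμ : ∀ V : Matrix.unitaryGroup n ℂ,
      Measure.map (fun U => V * U) μ = μ)
    (V : Matrix.unitaryGroup n ℂ) (f : Matrix.unitaryGroup n ℂ → ℂ)
    (hf : AEStronglyMeasurable f μ) :
    ∫ U, f (V * U) ∂μ = ∫ U, f U ∂μ := by
  conv_rhs => rw [← hμ V]
  rw [integral_map (measurable_mulLeft V).aemeasurable]
  rw [hμ V]; exact hf



def permU (σ : Equiv.Perm n) : Matrix n n ℂ := Matrix.of fun i j => if i = σ j then 1 else 0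

lemma permU_mem (σ : Equiv.Perm n) : permU σ ∈ Matrix.unitaryGroup n ℂ := by
  rw [Matrix.mem_unitaryGroup_iff]
  ext i k
  rw [Matrix.mul_apply, Finset.sum_eq_single (σ⁻¹ i)]
  · simp [permU, Matrix.one_apply, Matrix.star_apply, eq_comm]
  · intro b _ hb
    have hne : i ≠ σ b := fun h => hb (by simp [h])
    simp [permU, Matrix.star_apply, hne]
  · simp

lemma permU_mul_apply (σ : Equiv.Perm n) (M : Matrix n n ℂ) (x j : n) :
    (permU σ * M) x j = M (σ⁻¹ x) j := by
  rw [Matrix.mul_apply, Finset.sum_eq_single (σ⁻¹ x)]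
  · simp [permU]
  · intro b _ hb
    have hne : x ≠ σ b := fun h => hb (by simp [h])
    simp [permU, hne]
  · simp

def diagMem (d : n → ℂ) (hd : ∀ x, conj (d x) * d x = 1) :
    Matrix.diagonal d ∈ Matrix.unitaryGroup n ℂ := by
  rw [Matrix.mem_unitaryGroup_iff]
  rw [Matrix.star_eq_conjTranspose, Matrix.diagonal_conjTranspose,
    Matrix.diagonal_mul_diagonal]
  have hds : d * star d = 1 := by
    funext x
    simp only [Pi.mul_apply, Pi.star_apply, Pi.one_apply]
    rw [mul_comm]; exact hd x
  have : (fun i => d i * star (d i)) = fun _ => (1:ℂ) := by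
    funext x
    rw [mul_comm]; exact hd x
  simp only [Pi.star_apply] at this ⊢
  rw [this]
  exact Matrix.diagonal_one


variable [IsProbabilityMeasure μ]

noncomputable def mom (e0 : n) (μ : Measure (Matrix.unitaryGroup n ℂ)) (i j k l : n) : ℂ :=
  ∫ U, m4 e0 i j k l U ∂μ

variable (hμ : ∀ V : Matrix.unitaryGroup n ℂ, Measure.map (fun U => V * U) μ = μ)

lemma phi_mulLeft (V U : Matrix.unitaryGroup n ℂ) (e0 x : n) :
    phi e0 (V * U) x = ∑ y, (V : Matrix n n ℂ) x y * phi e0 U y := by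
  simp [phi, Matrix.UnitaryGroup.mul_apply, Matrix.mul_apply]

include hμ in
lemma mom_diag (e0 : n) (d : n → ℂ) (hd : ∀ x, conj (d x) * d x = 1) (i j k l : n) :
    mom e0 μ i j k l = (d i * conj (d j) * d k * conj (d l)) * mom e0 μ i j k l := by
  set V : Matrix.unitaryGroup n ℂ := ⟨Matrix.diagonal d, diagMem d hd⟩ with hV
  have hphi : ∀ (U : Matrix.unitaryGroup n ℂ) (x : n), phi e0 (V * U) x = d x * phi e0 U x := by
    intro U x
    have : ((V * U : Matrix.unitaryGroup n ℂ) : Matrix n n ℂ) x e0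
        = (Matrix.diagonal d * (U : Matrix n n ℂ)) x e0 := by
      simp [Matrix.UnitaryGroup.mul_apply, hV, Matrix.mul_apply]
    rw [phi, this, Matrix.diagonal_mul]; rfl
  have key : ∀ U, m4 e0 i j k l (V * U) = (d i * conj (d j) * d k * conj (d l)) * m4 e0 i j k l U := by
    intro U
    simp only [m4, hphi, _root_.map_mul]
    ring
  calc mom e0 μ i j k l = ∫ U, m4 e0 i j k l (V * U) ∂μ :=
        (integral_mulLeft_inv μ hμ V _ (measurable_m4 e0 i j k l).aestronglyMeasurable).symm
    _ = ∫ U, (d i * conj (d j) * d k * conj (d l)) * m4 e0 i j k l U ∂μ := by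
        simp only [key]
    _ = _ := by rw [integral_const_mul]; rfl

include hμ in
lemma mom_perm (e0 : n) (σ : Equiv.Perm n) (i j k l : n) :
    mom e0 μ (σ i) (σ j) (σ k) (σ l) = mom e0 μ i j k l := by
  set V : Matrix.unitaryGroup n ℂ := ⟨permU σ, permU_mem σ⟩ with hV
  have hphi : ∀ (U : Matrix.unitaryGroup n ℂ) (x : n), phi e0 (V * U) x = phi e0 U (σ⁻¹ x) := by
    intro U x
    have : ((V * U : Matrix.unitaryGroup n ℂ) : Matrix n n ℂ) x e0
        = (permU σ * (U : Matrix n n ℂ)) x e0 := by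
      simp [Matrix.UnitaryGroup.mul_apply, hV, Matrix.mul_apply]
    rw [phi, this, permU_mul_apply]; rfl
  have key : ∀ U, m4 e0 (σ i) (σ j) (σ k) (σ l) (V * U) = m4 e0 i j k l U := by
    intro U
    simp only [m4, hphi, Equiv.Perm.inv_def, Equiv.symm_apply_apply]
  calc mom e0 μ (σ i) (σ j) (σ k) (σ l)
      = ∫ U, m4 e0 (σ i) (σ j) (σ k) (σ l) (V * U) ∂μ :=
        (integral_mulLeft_inv μ hμ V _ (measurable_m4 e0 _ _ _ _).aestronglyMeasurable).symm
    _ = mom e0 μ i j k l := by simp only [key]; rfl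

lemma mom_comm_pair (e0 i j k l : n) : mom e0 μ i j k l = mom e0 μ i l k j := by
  unfold mom m4
  congr 1
  funext U
  ring

lemma eq_zero_of_self_eq_mul {c x : ℂ} (hc : c ≠ 1) (h : x = c * x) : x = 0 := by
  have h2 : (1 - c) * x = 0 := by ring_nf; linear_combination h
  rcases mul_eq_zero.mp h2 with h3 | h3
  · exact absurd (by linear_combination -h3) hc
  · exact h3

include hμ in
lemma mom_vanish (e0 i j k l : n) (h : ¬((i = j ∧ k = l) ∨ (i = l ∧ k = j))) :
    mom e0 μ i j k l = 0 := by
  have hI : ∀ a : n, ∀ x : n, conj ((fun x => if x = a then Complex.I else 1) x) *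
      (fun x => if x = a then Complex.I else 1) x = 1 := by
    intro a x
    by_cases hx : x = a <;> simp [hx]
  by_cases hij : i = j
  · have hkl : k ≠ l := fun h' => h (Or.inl ⟨hij, h'⟩)
    have := mom_diag μ hμ e0 (fun x => if x = l then Complex.I else 1) (hI l) i j k l
    refine eq_zero_of_self_eq_mul ?_ this
    subst hij
    by_cases hil : i = l <;> simp [hil, hkl, Complex.ext_iff]
  · by_cases hil : i = l
    · have hkj : k ≠ j := fun h' => h (Or.inr ⟨hil, h'⟩)
      have := mom_diag μ hμ e0 (fun x => if x = j then Complex.I else 1) (hI j) i j k l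
      refine eq_zero_of_self_eq_mul ?_ this
      subst hil
      simp [hij, hkj, Ne.symm hij, Complex.ext_iff]
    · have := mom_diag μ hμ e0 (fun x => if x = i then Complex.I else 1) (hI i) i j k l
      refine eq_zero_of_self_eq_mul ?_ this
      by_cases hki : k = i <;>
        simp [hij, hil, hki, Ne.symm hij, Ne.symm hil, Complex.ext_iff] <;> norm_num



noncomputable def rC : ℂ := ((Real.sqrt 2 : ℝ) : ℂ)⁻¹

lemma conj_rC : conj rC = rC := by
  simp [rC, map_inv₀, Complex.conj_ofReal]

lemma rC_mul_rC : rC * rC = 2⁻¹ := by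
  rw [rC, ← mul_inv, ← Complex.ofReal_mul, Real.mul_self_sqrt (by norm_num)]
  norm_num

noncomputable def had (a b : n) : Matrix n n ℂ := Matrix.of fun i j =>
  if i = a then (if j = a then rC else if j = b then rC else 0)
  else if i = b then (if j = a then rC else if j = b then -rC else 0)
  else if j = i then 1 else 0

lemma row_sum {a b : n} (hab : a ≠ b) (c1 c2 : ℂ) (g : n → ℂ) :
    ∑ j, (if j = a then c1 else if j = b then c2 else 0) * g j = c1 * g a + c2 * g b := by
  have : ∀ j, (if j = a then c1 else if j = b then c2 else 0) * g j =
      (if j = a then c1 * g j else 0) + (if j = b then c2 * g j else 0) := by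
    intro j
    by_cases h1 : j = a
    · subst h1; simp [hab]
    · by_cases h2 : j = b
      · subst h2; simp [h1]
      · simp [h1, h2]
  rw [Finset.sum_congr rfl fun j _ => this j, Finset.sum_add_distrib,
    Finset.sum_ite_eq' Finset.univ a (fun j => c1 * g j),
    Finset.sum_ite_eq' Finset.univ b (fun j => c2 * g j)]
  simp

lemma had_mem {a b : n} (hab : a ≠ b) : had a b ∈ Matrix.unitaryGroup n ℂ := by
  rw [Matrix.mem_unitaryGroup_iff]
  ext i k
  rw [Matrix.mul_apply]
  simp only [Matrix.star_apply, Complex.star_def]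
  by_cases hi : i = a
  · have hrow : ∀ j, had a b i j = (if j = a then rC else if j = b then rC else 0) := by
      intro j; simp [had, hi]
    rw [Finset.sum_congr rfl fun j _ => by rw [hrow j], row_sum hab]
    by_cases hk : k = a
    · have e1 : had a b k a = rC := by simp [had, hk]
      have e2 : had a b k b = rC := by simp [had, hk, hab]
      rw [e1, e2, conj_rC, Matrix.one_apply, hi, hk, if_pos rfl,
        show rC * rC + rC * rC = 2 * (rC * rC) by ring, rC_mul_rC]
      norm_num
    · by_cases hk2 : k = b
      · have e1 : had a b k a = rC := by simp [had, hk2, Ne.symm hab, hab]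
        have e2 : had a b k b = -rC := by simp [had, hk2, Ne.symm hab]
        rw [e1, e2, conj_rC, map_neg, conj_rC, Matrix.one_apply, if_neg (by rw [hi, hk2]; exact hab)]
        ring
      · have e1 : had a b k a = 0 := by simp [had, hk, hk2, Ne.symm hk]
        have e2 : had a b k b = 0 := by simp [had, hk, hk2, Ne.symm hk2, hab]
        rw [e1, e2, Matrix.one_apply, if_neg (by rw [hi]; exact fun h => hk h.symm)]
        simp
  · by_cases hi2 : i = b
    · have hrow : ∀ j, had a b i j = (if j = a then rC else if j = b then -rC else 0) := by
        intro j; simp [had, hi2, Ne.symm hab, hab]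
      rw [Finset.sum_congr rfl fun j _ => by rw [hrow j], row_sum hab]
      by_cases hk : k = a
      · have e1 : had a b k a = rC := by simp [had, hk]
        have e2 : had a b k b = rC := by simp [had, hk, hab]
        rw [e1, e2, conj_rC, Matrix.one_apply, if_neg (by rw [hi2, hk]; exact Ne.symm hab)]
        ring
      · by_cases hk2 : k = b
        · have e1 : had a b k a = rC := by simp [had, hk2, Ne.symm hab, hab]
          have e2 : had a b k b = -rC := by simp [had, hk2, Ne.symm hab]
          rw [e1, e2, conj_rC, map_neg, conj_rC, Matrix.one_apply, hi2, hk2, if_pos rfl]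
          rw [show rC * rC + -rC * -rC = 2 * (rC * rC) by ring, rC_mul_rC]
          norm_num
        · have e1 : had a b k a = 0 := by simp [had, hk, hk2, Ne.symm hk]
          have e2 : had a b k b = 0 := by simp [had, hk, hk2, Ne.symm hk2, hab]
          rw [e1, e2, Matrix.one_apply, if_neg (by rw [hi2]; exact fun h => hk2 h.symm)]
          simp
    · have hrow : ∀ j, had a b i j = (if j = i then 1 else 0) := by
        intro j; simp [had, hi, hi2]
      rw [Finset.sum_congr rfl fun j _ => by rw [hrow j]]
      rw [Finset.sum_congr rfl (fun j _ => (ite_mul (j = i) _ _ _))]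
      simp only [one_mul, zero_mul]
      rw [Finset.sum_ite_eq' Finset.univ i (fun j => conj (had a b k j))]
      simp only [Finset.mem_univ, if_true]
      by_cases hk : k = a
      · have : had a b k i = 0 := by simp [had, hk, hi, hi2, Ne.symm hi, Ne.symm hi2]
        rw [this, Matrix.one_apply, if_neg (by rw [hk]; exact hi)]
        simp
      · by_cases hk2 : k = b
        · have : had a b k i = 0 := by simp [had, hk, hk2, Ne.symm hab, hi, hi2, Ne.symm hi, Ne.symm hi2]
          rw [this, Matrix.one_apply, if_neg (by rw [hk2]; exact hi2)]
          simp
        · have : had a b k i = if i = k then 1 else 0 := by simp [had, hk, hk2]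
          rw [this, Matrix.one_apply]
          by_cases h : i = k <;> simp [h, eq_comm]

include hμ in
lemma alpha_eq_two_beta (e0 a b : n) (hab : a ≠ b) :
    mom e0 μ a a a a = 2 * mom e0 μ a a b b := by
  classical
  set V : Matrix.unitaryGroup n ℂ := ⟨had a b, had_mem hab⟩ with hV
  set f : Fin 2 → n := ![a, b] with hf
  have hphiA : ∀ U : Matrix.unitaryGroup n ℂ,
      phi e0 (V * U) a = rC * phi e0 U a + rC * phi e0 U b := by
    intro U
    rw [phi_mulLeft]
    have hrow : ∀ j, (V : Matrix n n ℂ) a j = (if j = a then rC else if j = b then rC else 0) := by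
      intro j; simp [hV, had]
    rw [Finset.sum_congr rfl fun j _ => by rw [hrow j], row_sum hab]
  have expand : ∀ U, m4 e0 a a a a (V * U) =
      (4:ℂ)⁻¹ * ∑ t : (Fin 2 × Fin 2) × (Fin 2 × Fin 2),
        m4 e0 (f t.1.1) (f t.1.2) (f t.2.1) (f t.2.2) U := by
    intro U
    have h1 : m4 e0 a a a a (V * U) = (rC * rC * (rC * rC)) *
        ((phi e0 U a + phi e0 U b) * conj (phi e0 U a + phi e0 U b) *
         ((phi e0 U a + phi e0 U b) * conj (phi e0 U a + phi e0 U b))) := by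
      rw [m4, hphiA U]
      simp only [map_add, _root_.map_mul, conj_rC]
      ring
    rw [h1, rC_mul_rC]
    rw [show ((2:ℂ)⁻¹ * 2⁻¹ : ℂ) = (4:ℂ)⁻¹ by norm_num]
    congr 1
    simp only [Fintype.sum_prod_type, Fin.sum_univ_two, hf, m4,
      Matrix.cons_val_zero, Matrix.cons_val_one, Matrix.head_cons]
    simp only [map_add]
    ring
  have step : mom e0 μ a a a a = (4:ℂ)⁻¹ * ∑ t : (Fin 2 × Fin 2) × (Fin 2 × Fin 2),
      mom e0 μ (f t.1.1) (f t.1.2) (f t.2.1) (f t.2.2) := by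
    calc mom e0 μ a a a a = ∫ U, m4 e0 a a a a (V * U) ∂μ :=
          (integral_mulLeft_inv μ hμ V _ (measurable_m4 e0 a a a a).aestronglyMeasurable).symm
      _ = ∫ U, (4:ℂ)⁻¹ * ∑ t : (Fin 2 × Fin 2) × (Fin 2 × Fin 2),
            m4 e0 (f t.1.1) (f t.1.2) (f t.2.1) (f t.2.2) U ∂μ := by simp only [expand]
      _ = (4:ℂ)⁻¹ * ∫ U, ∑ t : (Fin 2 × Fin 2) × (Fin 2 × Fin 2),
            m4 e0 (f t.1.1) (f t.1.2) (f t.2.1) (f t.2.2) U ∂μ := integral_const_mul _ _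
      _ = _ := by
          rw [integral_finset_sum _ (fun t _ => integrable_m4 μ e0 _ _ _ _)]
          rfl
  have hswap := mom_perm μ hμ e0 (Equiv.swap a b)
  have hba : Equiv.swap a b a = b := Equiv.swap_apply_left a b
  have hab' : Equiv.swap a b b = a := Equiv.swap_apply_right a b
  have hbbbb : mom e0 μ b b b b = mom e0 μ a a a a := by
    have := hswap a a a a; rwa [hba] at this
  have hbbaa : mom e0 μ b b a a = mom e0 μ a a b b := by
    have := hswap a a b b; rwa [hba, hab'] at this
  have habba : mom e0 μ a b b a = mom e0 μ a a b b := by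
    rw [mom_comm_pair]
  have hbaab : mom e0 μ b a a b = mom e0 μ a a b b := by
    rw [mom_comm_pair, hbbaa]
  have hv : ∀ i j k l : n, ¬((i = j ∧ k = l) ∨ (i = l ∧ k = j)) → mom e0 μ i j k l = 0 :=
    fun i j k l h => mom_vanish μ hμ e0 i j k l h
  rw [show (∑ t : (Fin 2 × Fin 2) × (Fin 2 × Fin 2),
      mom e0 μ (f t.1.1) (f t.1.2) (f t.2.1) (f t.2.2)) =
      mom e0 μ a a a a + mom e0 μ a a a b + mom e0 μ a a b a + mom e0 μ a a b b
      + mom e0 μ a b a a + mom e0 μ a b a b + mom e0 μ a b b a + mom e0 μ a b b b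
      + mom e0 μ b a a a + mom e0 μ b a a b + mom e0 μ b a b a + mom e0 μ b a b b
      + mom e0 μ b b a a + mom e0 μ b b a b + mom e0 μ b b b a + mom e0 μ b b b b from by
    simp only [Fintype.sum_prod_type, Fin.sum_univ_two, hf,
      Matrix.cons_val_zero, Matrix.cons_val_one, Matrix.head_cons]
    ring] at step
  rw [hv a a a b (by tauto), hv a a b a (by tauto), hv a b a a (by tauto),
    hv a b a b (by tauto), hv a b b b (by tauto), hv b a a a (by tauto),
    hv b a b a (by tauto), hv b a b b (by tauto), hv b b a b (by tauto),
    hv b b b a (by tauto), hbbbb, hbbaa, habba, hbaab] at step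
  linear_combination 2 * step


lemma sum_mom_eq_one (e0 : n) : ∑ i, ∑ k, mom e0 μ i i k k = 1 := by
  have hpt : ∀ U : Matrix.unitaryGroup n ℂ, ∑ i, ∑ k, m4 e0 i i k k U = 1 := by
    intro U
    have h := sum_conj_mul_phi e0 U
    calc ∑ i, ∑ k, m4 e0 i i k k U
        = (∑ i, conj (phi e0 U i) * phi e0 U i) * (∑ k, conj (phi e0 U k) * phi e0 U k) := by
          rw [Finset.sum_mul_sum]
          exact Finset.sum_congr rfl fun i _ => Finset.sum_congr rfl fun k _ => by
            rw [m4]; ring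
      _ = 1 := by rw [h]; norm_num
  have h1 : ∫ U, ∑ i, ∑ k, m4 e0 i i k k U ∂μ = ∑ i, ∑ k, mom e0 μ i i k k := by
    rw [integral_finset_sum _ (fun i _ =>
      integrable_finset_sum _ (fun k _ => integrable_m4 μ e0 _ _ _ _))]
    exact Finset.sum_congr rfl fun i _ =>
      integral_finset_sum _ (fun k _ => integrable_m4 μ e0 _ _ _ _)
  rw [← h1]
  simp only [hpt]
  simp

lemma exists_perm_pair (a b x y : n) (hab : a ≠ b) (hxy : x ≠ y) :
    ∃ σ : Equiv.Perm n, σ a = x ∧ σ b = y := by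
  refine ⟨(Equiv.swap a x).trans (Equiv.swap ((Equiv.swap a x) b) y), ?_, ?_⟩
  · have hc : x ≠ (Equiv.swap a x) b := by
      intro h
      have h2 : (Equiv.swap a x) a = (Equiv.swap a x) b := by
        rw [Equiv.swap_apply_left]; exact h
      exact hab ((Equiv.swap a x).injective h2)
    simp only [Equiv.trans_apply, Equiv.swap_apply_left]
    exact Equiv.swap_apply_of_ne_of_ne hc hxy
  · simp only [Equiv.trans_apply]
    exact Equiv.swap_apply_left _ y

include hμ in
lemma mom_formula (e0 i j k l : n) :
    mom e0 μ i j k l = ((Fintype.card n : ℂ) * ((Fintype.card n : ℂ) + 1))⁻¹ *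
      ((if i = j then (1:ℂ) else 0) * (if k = l then (1:ℂ) else 0) +
       (if i = l then (1:ℂ) else 0) * (if k = j then (1:ℂ) else 0)) := by
  classical
  have hDpos : 0 < Fintype.card n := Fintype.card_pos_iff.mpr ⟨e0⟩
  by_cases hcard : Fintype.card n = 1
  · have hsub : ∀ x y : n, x = y := fun x y => by
      have := Fintype.card_le_one_iff.mp (le_of_eq hcard)
      exact this x y
    have hij : i = j := hsub i j
    have hik : i = k := hsub i k
    have hil : i = l := hsub i l
    subst hij; subst hik; subst hil
    have hm : ∀ U : Matrix.unitaryGroup n ℂ, m4 e0 i i i i U = 1 := by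
      intro U
      have : Subsingleton n := Fintype.card_le_one_iff_subsingleton.mp (le_of_eq hcard)
      have h := sum_conj_mul_phi e0 U
      rw [Fintype.sum_subsingleton _ i] at h
      calc m4 e0 i i i i U
          = (conj (phi e0 U i) * phi e0 U i) * (conj (phi e0 U i) * phi e0 U i) := by
            rw [m4]; ring
        _ = 1 := by rw [h]; norm_num
    have : mom e0 μ i i i i = 1 := by
      rw [mom]; simp only [hm]; simp
    rw [this, hcard]
    norm_num
  · have h2 : 1 < Fintype.card n := lt_of_le_of_ne hDpos (Ne.symm hcard)
    obtain ⟨a, b, hab⟩ := Fintype.exists_pair_of_one_lt_card h2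
    set D : ℂ := (Fintype.card n : ℂ) with hD
    set β : ℂ := mom e0 μ a a b b with hβdef
    have hβpair : ∀ x y : n, x ≠ y → mom e0 μ x x y y = β := by
      intro x y hxy
      obtain ⟨σ, hσa, hσb⟩ := exists_perm_pair a b x y hab hxy
      have h := mom_perm μ hμ e0 σ a a b b
      rw [hσa, hσb] at h
      rw [hβdef]; exact h
    have hαx : ∀ x : n, mom e0 μ x x x x = 2 * β := by
      intro x
      have hs := mom_perm μ hμ e0 (Equiv.swap a x) a a a a
      rw [Equiv.swap_apply_left] at hs
      rw [hβdef]; exact hs.trans (alpha_eq_two_beta μ hμ e0 a b hab)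
    have hsum := sum_mom_eq_one μ e0
    have hrow : ∀ i : n, ∑ k, mom e0 μ i i k k = (D + 1) * β := by
      intro i
      have hterm : ∀ k : n, mom e0 μ i i k k = (if k = i then β else 0) + β := by
        intro k
        by_cases hk : k = i
        · subst hk; rw [hαx k]; simp; ring
        · rw [hβpair i k (fun h => hk h.symm)]; simp [hk]
      rw [Finset.sum_congr rfl fun k _ => hterm k, Finset.sum_add_distrib,
        Finset.sum_ite_eq' Finset.univ i fun _ => β, Finset.sum_const, Finset.card_univ,
        nsmul_eq_mul]
      simp only [Finset.mem_univ, if_true, ← hD]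
      ring
    rw [Finset.sum_congr rfl fun i _ => hrow i, Finset.sum_const, Finset.card_univ,
      nsmul_eq_mul, ← hD] at hsum
    have hD0 : D ≠ 0 := by
      rw [hD]; exact Nat.cast_ne_zero.mpr hDpos.ne'
    have hD10 : D + 1 ≠ 0 := by
      rw [hD]
      have : ((Fintype.card n + 1 : ℕ) : ℂ) ≠ 0 := Nat.cast_ne_zero.mpr (Nat.succ_ne_zero _)
      push_cast at this
      exact this
    have hβ : β = (D * (D + 1))⁻¹ :=
      eq_inv_of_mul_eq_one_left (by linear_combination hsum)
    by_cases h1 : i = j ∧ k = l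
    · obtain ⟨hij, hkl⟩ := h1
      subst hij; subst hkl
      by_cases hik : i = k
      · subst hik
        rw [hαx i, hβ]
        simp
        ring
      · rw [hβpair i k hik, hβ]
        simp [hik, Ne.symm hik]
    · by_cases hh2 : i = l ∧ k = j
      · obtain ⟨hil, hkj⟩ := hh2
        subst hil; subst hkj
        have hik : i ≠ k := fun h => h1 ⟨h, h.symm⟩
        rw [mom_comm_pair, hβpair i k hik, hβ]
        simp [hik, Ne.symm hik]
      · rw [mom_vanish μ hμ e0 i j k l (by tauto)]
        obtain hx | hx := not_and_or.mp h1 <;> obtain hy | hy := not_and_or.mp hh2 <;>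
          simp [hx, hy]

end HaarAux

namespace T
variable {Dv Dh : ℕ}

local notation "N" => (Fin Dv × Fin Dh)

lemma sandwich_apply (A B : Matrix N N ℂ) (φ : N → ℂ) (r c : N) :
    (A * proj φ * B) r c = ∑ t : N × N, A r t.1 * φ t.1 * (conj (φ t.2)) * B t.2 c := by
  rw [Matrix.mul_apply,
    Fintype.sum_prod_type (f := fun t : N × N => A r t.1 * φ t.1 * (conj (φ t.2)) * B t.2 c),
    Finset.sum_comm]
  refine Finset.sum_congr rfl fun j _ => ?_
  rw [Matrix.mul_apply, Finset.sum_mul]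
  refine Finset.sum_congr rfl fun i _ => ?_
  simp only [proj, Matrix.of_apply, Complex.star_def]
  ring

lemma trH_sandwich (A B : Matrix N N ℂ) (φ : N → ℂ) (p v : Fin Dv) :
    trH (A * proj φ * B) p v = ∑ t : Fin Dh × (N × N),
      A (p, t.1) t.2.1 * φ t.2.1 * conj (φ t.2.2) * B t.2.2 (v, t.1) := by
  rw [trH, Matrix.of_apply, Fintype.sum_prod_type]
  exact Finset.sum_congr rfl fun q _ => sandwich_apply A B φ (p, q) (v, q)

lemma trace_pair (M₁ M₂ : Matrix (Fin Dv) (Fin Dv) ℂ) :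
    (M₁ * M₂).trace = ∑ pv : Fin Dv × Fin Dv, M₁ pv.1 pv.2 * M₂ pv.2 pv.1 := by
  rw [Matrix.trace, Fintype.sum_prod_type]
  exact Finset.sum_congr rfl fun p _ => by rw [Matrix.diag_apply, Matrix.mul_apply]

lemma trace_pairH (M₁ M₂ : Matrix (Fin Dh) (Fin Dh) ℂ) :
    (M₁ * M₂).trace = ∑ qs : Fin Dh × Fin Dh, M₁ qs.1 qs.2 * M₂ qs.2 qs.1 := by
  rw [Matrix.trace, Fintype.sum_prod_type]
  exact Finset.sum_congr rfl fun p _ => by rw [Matrix.diag_apply, Matrix.mul_apply]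

/-- L1 : full expansion of the random trace quantity. -/
lemma trace_expand (A B C E : Matrix N N ℂ) (φ : N → ℂ) :
    ((trH (A * proj φ * B)) * (trH (C * proj φ * E))).trace =
    ∑ x : (Fin Dv × Fin Dv) × (Fin Dh × (N × N)) × (Fin Dh × (N × N)),
      (A (x.1.1, x.2.1.1) x.2.1.2.1 * B x.2.1.2.2 (x.1.2, x.2.1.1)
        * C (x.1.2, x.2.2.1) x.2.2.2.1 * E x.2.2.2.2 (x.1.1, x.2.2.1))
      * (φ x.2.1.2.1 * conj (φ x.2.1.2.2) * φ x.2.2.2.1 * conj (φ x.2.2.2.2)) := by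
  rw [trace_pair,
    Fintype.sum_prod_type (f := fun x : (Fin Dv × Fin Dv) × (Fin Dh × (N × N)) × (Fin Dh × (N × N)) =>
      (A (x.1.1, x.2.1.1) x.2.1.2.1 * B x.2.1.2.2 (x.1.2, x.2.1.1)
        * C (x.1.2, x.2.2.1) x.2.2.2.1 * E x.2.2.2.2 (x.1.1, x.2.2.1))
      * (φ x.2.1.2.1 * conj (φ x.2.1.2.2) * φ x.2.2.2.1 * conj (φ x.2.2.2.2)))]
  refine Finset.sum_congr rfl fun pv _ => ?_
  rw [trH_sandwich, trH_sandwich, Finset.sum_mul_sum,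
    Fintype.sum_prod_type (f := fun y : (Fin Dh × (N × N)) × (Fin Dh × (N × N)) =>
      (A (pv.1, y.1.1) y.1.2.1 * B y.1.2.2 (pv.2, y.1.1)
        * C (pv.2, y.2.1) y.2.2.1 * E y.2.2.2 (pv.1, y.2.1))
      * (φ y.1.2.1 * conj (φ y.1.2.2) * φ y.2.2.1 * conj (φ y.2.2.2)))]
  refine Finset.sum_congr rfl fun t1 _ => Finset.sum_congr rfl fun t2 _ => ?_
  ring

lemma delta_half (A B : Matrix N N ℂ) (p v : Fin Dv) :
    ∑ t : Fin Dh × (N × N), (A (p, t.1) t.2.1 * B t.2.2 (v, t.1))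
      * (if t.2.1 = t.2.2 then (1:ℂ) else 0) = trH (A * B) p v := by
  rw [Fintype.sum_prod_type (f := fun t : Fin Dh × (N × N) =>
      (A (p, t.1) t.2.1 * B t.2.2 (v, t.1)) * (if t.2.1 = t.2.2 then (1:ℂ) else 0)),
    trH, Matrix.of_apply]
  refine Finset.sum_congr rfl fun q _ => ?_
  rw [Matrix.mul_apply, Fintype.sum_prod_type (f := fun t : N × N =>
      (A (p, q) t.1 * B t.2 (v, q)) * (if t.1 = t.2 then (1:ℂ) else 0))]
  refine Finset.sum_congr rfl fun i _ => ?_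
  simp [mul_ite, Finset.sum_ite_eq]

/-- L2 : the `δ_{ij} δ_{km}` contraction. -/
lemma contract_same (A B C E : Matrix N N ℂ) :
    ∑ x : (Fin Dv × Fin Dv) × (Fin Dh × (N × N)) × (Fin Dh × (N × N)),
      (A (x.1.1, x.2.1.1) x.2.1.2.1 * B x.2.1.2.2 (x.1.2, x.2.1.1)
        * C (x.1.2, x.2.2.1) x.2.2.2.1 * E x.2.2.2.2 (x.1.1, x.2.2.1))
      * ((if x.2.1.2.1 = x.2.1.2.2 then (1:ℂ) else 0)
          * (if x.2.2.2.1 = x.2.2.2.2 then (1:ℂ) else 0))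
    = ((trH (A * B)) * (trH (C * E))).trace := by
  rw [trace_pair,
    Fintype.sum_prod_type (f := fun x : (Fin Dv × Fin Dv) × (Fin Dh × (N × N)) × (Fin Dh × (N × N)) =>
      (A (x.1.1, x.2.1.1) x.2.1.2.1 * B x.2.1.2.2 (x.1.2, x.2.1.1)
        * C (x.1.2, x.2.2.1) x.2.2.2.1 * E x.2.2.2.2 (x.1.1, x.2.2.1))
      * ((if x.2.1.2.1 = x.2.1.2.2 then (1:ℂ) else 0)
          * (if x.2.2.2.1 = x.2.2.2.2 then (1:ℂ) else 0)))]
  refine Finset.sum_congr rfl fun pv _ => ?_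
  rw [← delta_half A B pv.1 pv.2, ← delta_half C E pv.2 pv.1, Finset.sum_mul_sum,
    Fintype.sum_prod_type (f := fun y : (Fin Dh × (N × N)) × (Fin Dh × (N × N)) =>
      (A (pv.1, y.1.1) y.1.2.1 * B y.1.2.2 (pv.2, y.1.1)
        * C (pv.2, y.2.1) y.2.2.1 * E y.2.2.2 (pv.1, y.2.1))
      * ((if y.1.2.1 = y.1.2.2 then (1:ℂ) else 0) * (if y.2.2.1 = y.2.2.2 then (1:ℂ) else 0)))]
  refine Finset.sum_congr rfl fun t1 _ => Finset.sum_congr rfl fun t2 _ => ?_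
  ring

/-- L3 : the `δ_{im} δ_{kj}` contraction. -/
lemma contract_cross (A B C E : Matrix N N ℂ) :
    ∑ x : (Fin Dv × Fin Dv) × (Fin Dh × (N × N)) × (Fin Dh × (N × N)),
      (A (x.1.1, x.2.1.1) x.2.1.2.1 * B x.2.1.2.2 (x.1.2, x.2.1.1)
        * C (x.1.2, x.2.2.1) x.2.2.2.1 * E x.2.2.2.2 (x.1.1, x.2.2.1))
      * ((if x.2.1.2.1 = x.2.2.2.2 then (1:ℂ) else 0)
          * (if x.2.2.2.1 = x.2.1.2.2 then (1:ℂ) else 0))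
    = ((trV (C * B)) * (trV (A * E))).trace := by
  have step1 : ∀ pv : Fin Dv × Fin Dv,
      (∑ y : (Fin Dh × (N × N)) × (Fin Dh × (N × N)),
        (A (pv.1, y.1.1) y.1.2.1 * B y.1.2.2 (pv.2, y.1.1)
          * C (pv.2, y.2.1) y.2.2.1 * E y.2.2.2 (pv.1, y.2.1))
        * ((if y.1.2.1 = y.2.2.2 then (1:ℂ) else 0) * (if y.2.2.1 = y.1.2.2 then (1:ℂ) else 0)))
      = ∑ w : (Fin Dh × (N × N)) × Fin Dh,
          (A (pv.1, w.1.1) w.1.2.1 * B w.1.2.2 (pv.2, w.1.1))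
          * (C (pv.2, w.2) w.1.2.2 * E w.1.2.1 (pv.1, w.2)) := by
    intro pv
    rw [Fintype.sum_prod_type (f := fun y : (Fin Dh × (N × N)) × (Fin Dh × (N × N)) =>
        (A (pv.1, y.1.1) y.1.2.1 * B y.1.2.2 (pv.2, y.1.1)
          * C (pv.2, y.2.1) y.2.2.1 * E y.2.2.2 (pv.1, y.2.1))
        * ((if y.1.2.1 = y.2.2.2 then (1:ℂ) else 0) * (if y.2.2.1 = y.1.2.2 then (1:ℂ) else 0))),
      Fintype.sum_prod_type (f := fun w : (Fin Dh × (N × N)) × Fin Dh =>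
          (A (pv.1, w.1.1) w.1.2.1 * B w.1.2.2 (pv.2, w.1.1))
          * (C (pv.2, w.2) w.1.2.2 * E w.1.2.1 (pv.1, w.2)))]
    refine Finset.sum_congr rfl fun t1 _ => ?_
    rw [Fintype.sum_prod_type (f := fun t2 : Fin Dh × (N × N) =>
        (A (pv.1, t1.1) t1.2.1 * B t1.2.2 (pv.2, t1.1)
          * C (pv.2, t2.1) t2.2.1 * E t2.2.2 (pv.1, t2.1))
        * ((if t1.2.1 = t2.2.2 then (1:ℂ) else 0) * (if t2.2.1 = t1.2.2 then (1:ℂ) else 0)))]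
    refine Finset.sum_congr rfl fun s _ => ?_
    rw [Fintype.sum_prod_type (f := fun km : N × N =>
        (A (pv.1, t1.1) t1.2.1 * B t1.2.2 (pv.2, t1.1)
          * C (pv.2, s) km.1 * E km.2 (pv.1, s))
        * ((if t1.2.1 = km.2 then (1:ℂ) else 0) * (if km.1 = t1.2.2 then (1:ℂ) else 0)))]
    simp only [mul_ite, mul_one, mul_zero, ite_mul, zero_mul, one_mul]
    rw [Finset.sum_comm]
    simp only [Finset.sum_ite_eq, Finset.sum_ite_eq', Finset.mem_univ, if_true]
    ring
  rw [Fintype.sum_prod_type (f := fun x : (Fin Dv × Fin Dv) × (Fin Dh × (N × N)) × (Fin Dh × (N × N)) =>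
      (A (x.1.1, x.2.1.1) x.2.1.2.1 * B x.2.1.2.2 (x.1.2, x.2.1.1)
        * C (x.1.2, x.2.2.1) x.2.2.2.1 * E x.2.2.2.2 (x.1.1, x.2.2.1))
      * ((if x.2.1.2.1 = x.2.2.2.2 then (1:ℂ) else 0)
          * (if x.2.2.2.1 = x.2.1.2.2 then (1:ℂ) else 0)))]
  rw [Finset.sum_congr rfl fun pv _ => step1 pv]
  rw [← Fintype.sum_prod_type (f := fun z : (Fin Dv × Fin Dv) × ((Fin Dh × (N × N)) × Fin Dh) =>
      (A (z.1.1, z.2.1.1) z.2.1.2.1 * B z.2.1.2.2 (z.1.2, z.2.1.1))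
      * (C (z.1.2, z.2.2) z.2.1.2.2 * E z.2.1.2.1 (z.1.1, z.2.2)))]
  -- now transform the trace side into a flat sum
  have htrV1 : ∀ sq : Fin Dh × Fin Dh, trV (C * B) sq.1 sq.2
      = ∑ vj : Fin Dv × N, C (vj.1, sq.1) vj.2 * B vj.2 (vj.1, sq.2) := by
    intro sq
    rw [trV, Matrix.of_apply,
      Fintype.sum_prod_type (f := fun vj : Fin Dv × N => C (vj.1, sq.1) vj.2 * B vj.2 (vj.1, sq.2))]
    exact Finset.sum_congr rfl fun v _ => by rw [Matrix.mul_apply]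
  have htrV2 : ∀ sq : Fin Dh × Fin Dh, trV (A * E) sq.2 sq.1
      = ∑ pi : Fin Dv × N, A (pi.1, sq.2) pi.2 * E pi.2 (pi.1, sq.1) := by
    intro sq
    rw [trV, Matrix.of_apply,
      Fintype.sum_prod_type (f := fun pi : Fin Dv × N => A (pi.1, sq.2) pi.2 * E pi.2 (pi.1, sq.1))]
    exact Finset.sum_congr rfl fun p _ => by rw [Matrix.mul_apply]
  have hRHS : ((trV (C * B)) * (trV (A * E))).trace
      = ∑ u : (Fin Dh × Fin Dh) × ((Fin Dv × N) × (Fin Dv × N)),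
        (C (u.2.1.1, u.1.1) u.2.1.2 * B u.2.1.2 (u.2.1.1, u.1.2))
        * (A (u.2.2.1, u.1.2) u.2.2.2 * E u.2.2.2 (u.2.2.1, u.1.1)) := by
    rw [trace_pairH,
      Fintype.sum_prod_type (f := fun u : (Fin Dh × Fin Dh) × ((Fin Dv × N) × (Fin Dv × N)) =>
        (C (u.2.1.1, u.1.1) u.2.1.2 * B u.2.1.2 (u.2.1.1, u.1.2))
        * (A (u.2.2.1, u.1.2) u.2.2.2 * E u.2.2.2 (u.2.2.1, u.1.1)))]
    refine Finset.sum_congr rfl fun sq _ => ?_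
    rw [htrV1 sq, htrV2 sq, Finset.sum_mul_sum,
      Fintype.sum_prod_type (f := fun w : (Fin Dv × N) × (Fin Dv × N) =>
        (C (w.1.1, sq.1) w.1.2 * B w.1.2 (w.1.1, sq.2))
        * (A (w.2.1, sq.2) w.2.2 * E w.2.2 (w.2.1, sq.1)))]
  rw [hRHS]
  refine Fintype.sum_equiv
    ⟨fun z : (Fin Dv × Fin Dv) × ((Fin Dh × (N × N)) × Fin Dh) =>
        ((z.2.2, z.2.1.1), (z.1.2, z.2.1.2.2), (z.1.1, z.2.1.2.1)),
     fun u => ((u.2.2.1, u.2.1.1), ((u.1.2, (u.2.2.2, u.2.1.2)), u.1.1)),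
     fun z => rfl, fun u => rfl⟩ _ _ (fun z => by simp only [Equiv.coe_fn_mk]; ring)
end T


open HaarAux T

/-- Haar average of products of partial traces, Appendix A of the paper:
for a Hermitian `K` on `ℂ^{Dv} ⊗ ℂ^{Dh}`, `D = Dv Dh`, and a Haar-random unit vector
`φ = U e₀`,
`E[Tr(Tr_h(K^{p₁}|φ⟩⟨φ|K^{p₂}) Tr_h(K^{q₁}|φ⟩⟨φ|K^{q₂}))]
  = (Tr(Tr_h K^{p₁+p₂} Tr_h K^{q₁+q₂}) + Tr(Tr_v K^{q₁+p₂} Tr_v K^{p₁+q₂})) / (D(D+1))`. -/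
theorem haar_average_partial_trace_products (Dv Dh : ℕ) (hv : 0 < Dv) (hh : 0 < Dh)
    (K : Matrix (Fin Dv × Fin Dh) (Fin Dv × Fin Dh) ℂ) (hK : K.IsHermitian)
    (p₁ p₂ q₁ q₂ : ℕ)
    (μ : Measure (Matrix.unitaryGroup (Fin Dv × Fin Dh) ℂ)) [IsProbabilityMeasure μ]
    (hμ : ∀ V : Matrix.unitaryGroup (Fin Dv × Fin Dh) ℂ,
      Measure.map (fun U => V * U) μ = μ) :
    ∫ U : Matrix.unitaryGroup (Fin Dv × Fin Dh) ℂ,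
        ((trH (K ^ p₁ * proj (fun i =>
            (U : Matrix (Fin Dv × Fin Dh) (Fin Dv × Fin Dh) ℂ) i (⟨0, hv⟩, ⟨0, hh⟩)) * K ^ p₂)) *
          (trH (K ^ q₁ * proj (fun i =>
            (U : Matrix (Fin Dv × Fin Dh) (Fin Dv × Fin Dh) ℂ) i (⟨0, hv⟩, ⟨0, hh⟩)) * K ^ q₂))).trace
        ∂μ =
      (((Dv : ℂ) * (Dh : ℂ)) * ((Dv : ℂ) * (Dh : ℂ) + 1))⁻¹ *
        (((trH (K ^ (p₁ + p₂))) * (trH (K ^ (q₁ + q₂)))).trace +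
          ((trV (K ^ (q₁ + p₂))) * (trV (K ^ (p₁ + q₂)))).trace) := by
    classical
  set e0 : Fin Dv × Fin Dh := (⟨0, hv⟩, ⟨0, hh⟩) with he0
  set A := K ^ p₁ with hA
  set B := K ^ p₂ with hB
  set C := K ^ q₁ with hC
  set E := K ^ q₂ with hE
  set c : ℂ := (((Dv : ℂ) * (Dh : ℂ)) * ((Dv : ℂ) * (Dh : ℂ) + 1))⁻¹ with hc
  have hcard : (Fintype.card (Fin Dv × Fin Dh) : ℂ) = (Dv : ℂ) * (Dh : ℂ) := by
    simp [Fintype.card_prod]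
  have hmom : ∀ i j k l : Fin Dv × Fin Dh, mom e0 μ i j k l =
      c * ((if i = j then (1:ℂ) else 0) * (if k = l then (1:ℂ) else 0) +
           (if i = l then (1:ℂ) else 0) * (if k = j then (1:ℂ) else 0)) := by
    intro i j k l
    rw [mom_formula μ hμ e0 i j k l, hc, hcard]
  have h1 : ∀ U : Matrix.unitaryGroup (Fin Dv × Fin Dh) ℂ,
      ((trH (A * proj (fun i =>
          (U : Matrix (Fin Dv × Fin Dh) (Fin Dv × Fin Dh) ℂ) i e0) * B)) *
        (trH (C * proj (fun i =>
          (U : Matrix (Fin Dv × Fin Dh) (Fin Dv × Fin Dh) ℂ) i e0) * E))).trace =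
      ∑ x : (Fin Dv × Fin Dv) × (Fin Dh × ((Fin Dv × Fin Dh) × (Fin Dv × Fin Dh)))
            × (Fin Dh × ((Fin Dv × Fin Dh) × (Fin Dv × Fin Dh))),
        (A (x.1.1, x.2.1.1) x.2.1.2.1 * B x.2.1.2.2 (x.1.2, x.2.1.1)
          * C (x.1.2, x.2.2.1) x.2.2.2.1 * E x.2.2.2.2 (x.1.1, x.2.2.1))
        * m4 e0 x.2.1.2.1 x.2.1.2.2 x.2.2.2.1 x.2.2.2.2 U := by
    intro U
    exact trace_expand A B C E (fun i =>
      (U : Matrix (Fin Dv × Fin Dh) (Fin Dv × Fin Dh) ℂ) i e0)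
  calc ∫ U : Matrix.unitaryGroup (Fin Dv × Fin Dh) ℂ,
        ((trH (A * proj (fun i =>
            (U : Matrix (Fin Dv × Fin Dh) (Fin Dv × Fin Dh) ℂ) i e0) * B)) *
          (trH (C * proj (fun i =>
            (U : Matrix (Fin Dv × Fin Dh) (Fin Dv × Fin Dh) ℂ) i e0) * E))).trace ∂μ
      = ∫ U, ∑ x : (Fin Dv × Fin Dv) × (Fin Dh × ((Fin Dv × Fin Dh) × (Fin Dv × Fin Dh)))
            × (Fin Dh × ((Fin Dv × Fin Dh) × (Fin Dv × Fin Dh))),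
          (A (x.1.1, x.2.1.1) x.2.1.2.1 * B x.2.1.2.2 (x.1.2, x.2.1.1)
            * C (x.1.2, x.2.2.1) x.2.2.2.1 * E x.2.2.2.2 (x.1.1, x.2.2.1))
          * m4 e0 x.2.1.2.1 x.2.1.2.2 x.2.2.2.1 x.2.2.2.2 U ∂μ := by
        simp only [h1]
    _ = ∑ x : (Fin Dv × Fin Dv) × (Fin Dh × ((Fin Dv × Fin Dh) × (Fin Dv × Fin Dh)))
            × (Fin Dh × ((Fin Dv × Fin Dh) × (Fin Dv × Fin Dh))),
          (A (x.1.1, x.2.1.1) x.2.1.2.1 * B x.2.1.2.2 (x.1.2, x.2.1.1)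
            * C (x.1.2, x.2.2.1) x.2.2.2.1 * E x.2.2.2.2 (x.1.1, x.2.2.1))
          * mom e0 μ x.2.1.2.1 x.2.1.2.2 x.2.2.2.1 x.2.2.2.2 := by
        rw [integral_finset_sum _ (fun x _ =>
          (integrable_m4 μ e0 x.2.1.2.1 x.2.1.2.2 x.2.2.2.1 x.2.2.2.2).const_mul _)]
        exact Finset.sum_congr rfl fun x _ => integral_const_mul _ _
    _ = c * ((∑ x : (Fin Dv × Fin Dv) × (Fin Dh × ((Fin Dv × Fin Dh) × (Fin Dv × Fin Dh)))
            × (Fin Dh × ((Fin Dv × Fin Dh) × (Fin Dv × Fin Dh))),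
          (A (x.1.1, x.2.1.1) x.2.1.2.1 * B x.2.1.2.2 (x.1.2, x.2.1.1)
            * C (x.1.2, x.2.2.1) x.2.2.2.1 * E x.2.2.2.2 (x.1.1, x.2.2.1))
          * ((if x.2.1.2.1 = x.2.1.2.2 then (1:ℂ) else 0)
              * (if x.2.2.2.1 = x.2.2.2.2 then (1:ℂ) else 0)))
        + (∑ x : (Fin Dv × Fin Dv) × (Fin Dh × ((Fin Dv × Fin Dh) × (Fin Dv × Fin Dh)))
            × (Fin Dh × ((Fin Dv × Fin Dh) × (Fin Dv × Fin Dh))),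
          (A (x.1.1, x.2.1.1) x.2.1.2.1 * B x.2.1.2.2 (x.1.2, x.2.1.1)
            * C (x.1.2, x.2.2.1) x.2.2.2.1 * E x.2.2.2.2 (x.1.1, x.2.2.1))
          * ((if x.2.1.2.1 = x.2.2.2.2 then (1:ℂ) else 0)
              * (if x.2.2.2.1 = x.2.1.2.2 then (1:ℂ) else 0)))) := by
        rw [mul_add, Finset.mul_sum, Finset.mul_sum, ← Finset.sum_add_distrib]
        refine Finset.sum_congr rfl fun x _ => ?_
        rw [hmom]
        ring
    _ = c * ((((trH (A * B)) * (trH (C * E))).trace)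
           + (((trV (C * B)) * (trV (A * E))).trace)) := by
        rw [contract_same A B C E, contract_cross A B C E]
    _ = _ := by
        rw [hA, hB, hC, hE, ← pow_add, ← pow_add, ← pow_add, ← pow_add, hc]
end
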